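/- arXiv:1502.00590 — 12 statements merged into one kernel-verified Lean document; each statement's English description precedes it below -/
import Mathlib

section
/- Let B ⊆ A be rings, α an automorphism of A and β an automorphism of B. If A is finitely generated projective as a left B-module and there is an (A,B)-bimodule isomorphism A ≅ Hom_B(_β A_α, B) (where _β A_α denotes A viewed as a (B,A)-bimodule with left B-action b·a = β(b)a and right A-action a·a' = a α(a')), then A is finitely generated projective as a right B-module. -/
open MulOpposite

set_option synthInstance.maxHeartbeats 1000000
set_option maxHeartbeats 1000000

/-- Let `B ⊆ A` be rings, `α` an automorphism of `A` and `β` an automorphism of `B`.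
If `A` is finitely generated projective as a left `B`-module and there is an
`(A,B)`-bimodule isomorphism `A ≅ Hom_B(_β A_α, B)` (where `_β A_α` is `A` with left
`B`-action `b · a = β(b) a` and right `A`-action `a · a' = a α(a')`, and the Hom space
carries left `A`-action `(a · f)(x) = f(x α(a))` and right `B`-action `(f · b)(x) = f(x) b`),
then `A` is finitely generated projective as a right `B`-module (i.e. `Aᵐᵒᵖ` is a
finitely generated projective module over the opposite subring `B.op`). -/
theorem finite_projective_right_of_twisted_frobenius
    {A : Type u} [Ring A] (B : Subring A) (α : A ≃+* A) (β : B ≃+* B)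
    (hfin : Module.Finite B A) (hproj : Module.Projective B A)
    (Φ : A → A →+ B)
    (hΦadd : ∀ a a' : A, Φ (a + a') = Φ a + Φ a')
    (hΦBlin : ∀ (a : A) (b : B) (x : A), Φ a ((β b : A) * x) = b * Φ a x)
    (hΦA : ∀ (a a' x : A), Φ (a' * a) x = Φ a (x * α a'))
    (hΦB : ∀ (a : A) (b : B) (x : A), Φ (a * (b : A)) x = Φ a x * b)
    (hΦinj : ∀ a : A, (∀ x : A, Φ a x = 0) → a = 0)
    (hΦsurj : ∀ f : A →+ B, (∀ (b : B) (x : A), f ((β b : A) * x) = b * f x) →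
      ∃ a : A, ∀ x : A, f x = Φ a x) :
    Module.Finite B.op Aᵐᵒᵖ ∧ Module.Projective B.op Aᵐᵒᵖ := by
  classical
  -- Φ as an additive map in the first variable
  let Ψ : A →+ A →+ B := AddMonoidHom.mk' Φ hΦadd
  have hΨ : ∀ a x, Ψ a x = Φ a x := fun _ _ => rfl
  -- Step 1: finite dual basis for the left module
  obtain ⟨n, p, hp⟩ := Module.Finite.exists_fin' B A
  obtain ⟨s, hs⟩ := Module.projective_lifting_property p LinearMap.id hp
  set x : Fin n → A := fun i => p (Pi.single i 1) with hx
  set f : Fin n → (A →ₗ[B] B) := fun i => (LinearMap.proj i).comp s with hf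
  have hdual : ∀ a : A, ∑ i, ((f i a : A) * x i) = a := by
    intro a
    have h1 : p (s a) = a := by
      have := LinearMap.congr_fun hs a
      simpa using this
    have h2 : ∀ i, p (Pi.single i (s a i)) = (s a i) • x i := by
      intro i
      have hsingle : (Pi.single i (s a i) : Fin n → B)
          = (s a i) • (Pi.single i (1 : B) : Fin n → B) := by
        rw [← Pi.single_smul, smul_eq_mul, mul_one]
      rw [hsingle, map_smul]
    calc ∑ i, ((f i a : A) * x i) = ∑ i, (s a i) • x i := rfl
    _ = ∑ i, p (Pi.single i (s a i)) := by simp [h2]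
    _ = p (∑ i, Pi.single i (s a i)) := (map_sum p _ _).symm
    _ = p (s a) := by rw [Finset.univ_sum_single]
    _ = a := h1
  -- Step 2: represent the dual basis functionals via Φ
  have hc : ∀ i, ∃ c : A, ∀ y : A, f i y = β (Φ c y) := by
    intro i
    have hlin : ∀ (b : B) (y : A),
        β.symm (f i ((β b : A) * y)) = b * β.symm (f i y) := by
      intro b y
      have : f i ((β b : A) * y) = β b * f i y := by
        have := (f i).map_smul (β b) y
        simpa [Subring.smul_def] using this
      rw [this, map_mul, RingEquiv.symm_apply_apply]
    obtain ⟨c, hcv⟩ := hΦsurj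
      { toFun := fun y => β.symm (f i y)
        map_zero' := by simp
        map_add' := fun y z => by simp } (by intro b y; exact hlin b y)
    exact ⟨c, fun y => by
      have := hcv y
      simp only [AddMonoidHom.coe_mk, ZeroHom.coe_mk] at this
      rw [show Φ c y = β.symm (f i y) from this.symm, RingEquiv.apply_symm_apply]⟩
  choose c hcspec using hc
  -- additivity of Φ over sums in the first argument
  have hΦsum : ∀ (g : Fin n → A) (y : A), Φ (∑ i, g i) y = ∑ i, Φ (g i) y := by
    intro g y
    have := map_sum Ψ g Finset.univ
    calc Φ (∑ i, g i) y = Ψ (∑ i, g i) y := rfl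
    _ = (∑ i, Ψ (g i)) y := by rw [this]
    _ = ∑ i, Φ (g i) y := by
        rw [AddMonoidHom.finset_sum_apply]; rfl
  -- Step 3: the key right dual basis identity
  have key : ∀ a : A, (∑ i, c i * ((Φ a (x i) : B) : A)) = a := by
    intro a
    set S : A := ∑ i, c i * ((Φ a (x i) : B) : A) with hS
    have hzero : ∀ y : A, Φ (S - a) y = 0 := by
      intro y
      have hsub : Φ (S - a) y = Φ S y - Φ a y := by
        have h := map_sub Ψ S a
        calc Φ (S - a) y = Ψ (S - a) y := rfl
        _ = (Ψ S - Ψ a) y := by rw [h]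
        _ = Φ S y - Φ a y := rfl
      rw [hsub]
      have h1 : Φ S y = ∑ i, Φ (c i) y * Φ a (x i) := by
        rw [hS, hΦsum]
        exact Finset.sum_congr rfl fun i _ => hΦB (c i) (Φ a (x i)) y
      have h2 : Φ a y = ∑ i, Φ (c i) y * Φ a (x i) := by
        conv_lhs => rw [← hdual y]
        rw [map_sum]
        refine Finset.sum_congr rfl fun i _ => ?_
        rw [hcspec i y]
        exact hΦBlin a (Φ (c i) y) (x i)
      rw [h1, h2, sub_self]
    exact sub_eq_zero.mp (hΦinj _ hzero)
  -- Step 4: the splitting maps for the right module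
  have hmemop : ∀ (m : A) (i : Fin n), op ((Φ m (x i) : B) : A) ∈ B.op :=
    fun m i => (Φ m (x i)).2
  let S : Aᵐᵒᵖ →ₗ[B.op] (Fin n → B.op) :=
    { toFun := fun m i => ⟨op ((Φ (unop m) (x i) : B) : A), hmemop (unop m) i⟩
      map_add' := by
        intro m m'
        funext i
        apply Subtype.ext
        show op ((Φ (unop m + unop m') (x i) : B) : A) = _
        rw [hΦadd]
        simp
      map_smul' := by
        intro b m
        funext i
        apply Subtype.ext
        have hb : unop (b : Aᵐᵒᵖ) ∈ B := b.2
        show op ((Φ (unop m * (⟨unop (b : Aᵐᵒᵖ), hb⟩ : B) : A) (x i) : B) : A) = _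
        rw [hΦB (unop m) ⟨unop (b : Aᵐᵒᵖ), hb⟩ (x i)]
        rfl }
  let P : (Fin n → B.op) →ₗ[B.op] Aᵐᵒᵖ :=
    { toFun := fun v => ∑ i, ((v i : Aᵐᵒᵖ) * op (c i))
      map_add' := by
        intro v w
        simp [add_mul, Finset.sum_add_distrib]
      map_smul' := by
        intro b v
        show ∑ i, ((((b * v i : B.op) : Aᵐᵒᵖ)) * op (c i))
          = b • ∑ i, ((v i : Aᵐᵒᵖ) * op (c i))
        have hsm : b • (∑ i, ((v i : Aᵐᵒᵖ) * op (c i)))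
            = (b : Aᵐᵒᵖ) * ∑ i, ((v i : Aᵐᵒᵖ) * op (c i)) := rfl
        rw [hsm, Finset.mul_sum]
        exact Finset.sum_congr rfl fun i _ => by push_cast; rw [mul_assoc]
      }
  have hPS : ∀ m : Aᵐᵒᵖ, P (S m) = m := by
    intro m
    show ∑ i, (op ((Φ (unop m) (x i) : B) : A) * op (c i)) = m
    calc ∑ i, (op ((Φ (unop m) (x i) : B) : A) * op (c i))
        = ∑ i, op (c i * ((Φ (unop m) (x i) : B) : A)) := by
          exact Finset.sum_congr rfl fun i _ => rfl
    _ = op (∑ i, c i * ((Φ (unop m) (x i) : B) : A)) :=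
          (map_sum (opAddEquiv : A ≃+ Aᵐᵒᵖ) _ Finset.univ).symm
    _ = m := by rw [key (unop m), op_unop]
  constructor
  · exact Module.Finite.of_surjective P (fun m => ⟨S m, hPS m⟩)
  · exact Module.Projective.of_split S P (LinearMap.ext hPS)
end

section
/- Let B ⊆ A be rings with automorphisms α of A and β of B, and suppose Φ : A → Hom_B(_β A_α, B) is an (A,B)-bimodule isomorphism (conditions L1, L2 of a twisted Frobenius extension). Then the map Ψ : A → Hom_B^R(A_{β^{-1}}, B) defined by Ψ(a)(x) = β(Φ(x)(a)) (where the domain carries left A-action twisted by α^{-1} and right B-action twisted by β^{-1}) is an isomorphism of (B,A)-bimodules. -/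
set_option maxHeartbeats 1000000
set_option synthInstance.maxHeartbeats 400000

/-- Let `B ⊆ A` be rings with automorphisms `α` of `A` and `β` of `B`, and suppose
`Φ : A → Hom_B(_β A_α, B)` is an `(A,B)`-bimodule isomorphism (conditions L1, L2 of a
twisted Frobenius extension, where `A` is assumed finitely generated projective as a left
`B`-module).  Then the map `Ψ : A → Hom_B^R(_{α⁻¹} A_{β⁻¹}, B)` defined by
`Ψ(a)(x) = β(Φ(x)(a))` is an isomorphism of `(B,A)`-bimodules: each `Ψ a` is additive and
right `B`-linear for the right `B`-action twisted by `β⁻¹`, `Ψ` is additive, left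
`B`-linear and right `A`-linear (for the right `A`-action `(f · a)(x) = f(α⁻¹(a) x)`),
and `Ψ` is bijective onto the right `B`-linear maps. -/
theorem psi_is_bimodule_iso_of_twisted_frobenius
    {A : Type u} [Ring A] (B : Subring A) (α : A ≃+* A) (β : B ≃+* B)
    (hfin : Module.Finite B A) (hproj : Module.Projective B A)
    (Φ : A → A →+ B)
    (hΦadd : ∀ a a' : A, Φ (a + a') = Φ a + Φ a')
    (hΦBlin : ∀ (a : A) (b : B) (x : A), Φ a ((β b : A) * x) = b * Φ a x)
    (hΦA : ∀ (a a' x : A), Φ (a' * a) x = Φ a (x * α a'))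
    (hΦB : ∀ (a : A) (b : B) (x : A), Φ (a * (b : A)) x = Φ a x * b)
    (hΦinj : ∀ a : A, (∀ x : A, Φ a x = 0) → a = 0)
    (hΦsurj : ∀ f : A →+ B, (∀ (b : B) (x : A), f ((β b : A) * x) = b * f x) →
      ∃ a : A, ∀ x : A, f x = Φ a x) :
    -- Ψ a is additive in x (automatic since each Φ x is additive in its argument):
    (∀ (a x x' : A), β (Φ (x + x') a) = β (Φ x a) + β (Φ x' a)) ∧
    -- each Ψ a is right B-linear for the right B-action twisted by β⁻¹:
    (∀ (a x : A) (b : B), β (Φ (x * (β.symm b : A)) a) = β (Φ x a) * b) ∧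
    -- Ψ is additive:
    (∀ (a a' x : A), β (Φ x (a + a')) = β (Φ x a) + β (Φ x a')) ∧
    -- Ψ is left B-linear:
    (∀ (b : B) (a x : A), β (Φ x ((b : A) * a)) = b * β (Φ x a)) ∧
    -- Ψ is right A-linear:
    (∀ (a a' x : A), β (Φ x (a * a')) = β (Φ (α.symm a' * x) a)) ∧
    -- Ψ is injective:
    (∀ a : A, (∀ x : A, β (Φ x a) = 0) → a = 0) ∧
    -- Ψ is surjective onto the right B-linear maps:
    (∀ f : A →+ B, (∀ (b : B) (x : A), f (x * (β.symm b : A)) = f x * b) →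
      ∃ a : A, ∀ x : A, f x = β (Φ x a)) := by
  have h0 : Φ (0 : A) = 0 := by
    have h := hΦadd 0 0
    rw [add_zero] at h
    have h2 : Φ (0:A) + Φ (0:A) = Φ (0:A) + 0 := by rw [add_zero]; exact h.symm
    exact add_left_cancel h2
  have hΦsub : ∀ (u v x : A), Φ (u - v) x = Φ u x - Φ v x := by
    intro u v x
    have h := hΦadd (u - v) v
    rw [sub_add_cancel] at h
    have hx := DFunLike.congr_fun h x
    rw [AddMonoidHom.add_apply] at hx
    exact eq_sub_of_add_eq hx.symm
  have hΦsum : ∀ {n : ℕ} (t : Finset (Fin n)) (c : Fin n → A) (x : A),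
      Φ (∑ i ∈ t, c i) x = ∑ i ∈ t, Φ (c i) x := by
    intro n t c x
    induction t using Finset.induction_on with
    | empty => simp [h0]
    | insert _ _ h ih =>
      rw [Finset.sum_insert h, Finset.sum_insert h, hΦadd, AddMonoidHom.add_apply, ih]
  -- dual basis from finiteness + projectivity
  obtain ⟨n, π, hπ⟩ := Module.Finite.exists_fin' B A
  obtain ⟨s, hs⟩ := Module.projective_lifting_property π LinearMap.id hπ
  set xb : Fin n → A := fun i => π (fun j => if i = j then 1 else 0) with hxb
  have hexp : ∀ y : A, y = ∑ i, ((s y i : A) * xb i) := by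
    intro y
    have h1 : π (s y) = y := LinearMap.congr_fun hs y
    rw [LinearMap.pi_apply_eq_sum_univ π (s y)] at h1
    exact h1.symm
  -- the dual functionals are representable: s · i = β ∘ Φ (av i)
  have hrep : ∀ i : Fin n, ∃ a : A, ∀ x : A, s x i = β (Φ a x) := by
    intro i
    have hadd : ∀ u v : A, β.symm (s (u + v) i) = β.symm (s u i) + β.symm (s v i) := by
      intro u v; rw [map_add]; simp
    obtain ⟨a, ha⟩ := hΦsurj (AddMonoidHom.mk' (fun x => β.symm (s x i)) hadd) (by
      intro b x
      show β.symm (s ((β b : A) * x) i) = b * β.symm (s x i)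
      have h1 := s.map_smul (β b) x
      have h2 : s ((β b : A) * x) i = β b * s x i := by
        calc s ((β b : A) * x) i = s ((β b) • x) i := rfl
          _ = ((β b) • s x) i := by rw [h1]
          _ = β b * s x i := rfl
      rw [h2, map_mul, RingEquiv.symm_apply_apply])
    exact ⟨a, fun x => by
      have hax := ha x
      simp only [AddMonoidHom.mk'_apply] at hax
      rw [← hax, RingEquiv.apply_symm_apply]⟩
  choose av hav using hrep
  -- identity (I)
  have hI : ∀ y : A, y = ∑ i, ((β (Φ (av i) y) : A) * xb i) := by
    intro y
    conv_lhs => rw [hexp y]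
    exact Finset.sum_congr rfl fun i _ => by rw [hav i y]
  -- identity (II)
  have hII : ∀ w y : A, Φ w y = ∑ i, Φ (av i) y * Φ w (xb i) := by
    intro w y
    conv_lhs => rw [hI y]
    rw [map_sum]
    exact Finset.sum_congr rfl fun i _ => hΦBlin w (Φ (av i) y) (xb i)
  refine ⟨?_, ?_, ?_, ?_, ?_, ?_, ?_⟩
  · intro a x x'
    rw [hΦadd, AddMonoidHom.add_apply, map_add]
  · intro a x b
    rw [hΦB x (β.symm b) a, map_mul, RingEquiv.apply_symm_apply]
  · intro a a' x
    rw [map_add, map_add]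
  · intro b a x
    have h := hΦBlin x (β.symm b) a
    rw [RingEquiv.apply_symm_apply] at h
    rw [h, map_mul, RingEquiv.apply_symm_apply]
  · intro a a' x
    have h := hΦA x (α.symm a') a
    rw [RingEquiv.apply_symm_apply] at h
    rw [← h]
  · -- injectivity
    intro a h
    have h' : ∀ x : A, Φ x a = 0 := fun x => by
      have hx := h x
      rw [← map_zero β] at hx
      exact β.injective hx
    calc a = ∑ i, ((β (Φ (av i) a) : A) * xb i) := hI a
      _ = 0 := Finset.sum_eq_zero fun i _ => by rw [h' (av i), map_zero]; simp
  · -- surjectivity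
    intro f hf
    refine ⟨∑ i, ((f (av i) : A) * xb i), fun x => ?_⟩
    have key : ∑ i, av i * (Φ x (xb i) : A) = x := by
      apply sub_eq_zero.mp
      apply hΦinj
      intro v
      rw [hΦsub, hΦsum]
      have heach : ∀ i : Fin n, Φ (av i * (Φ x (xb i) : A)) v = Φ (av i) v * Φ x (xb i) :=
        fun i => hΦB (av i) (Φ x (xb i)) v
      rw [Finset.sum_congr rfl fun i _ => heach i, ← hII x v, sub_self]
    calc f x = f (∑ i, av i * (Φ x (xb i) : A)) := by rw [key]
      _ = ∑ i, f (av i * (Φ x (xb i) : A)) := map_sum f _ _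
      _ = ∑ i, f (av i) * β (Φ x (xb i)) := Finset.sum_congr rfl fun i _ => by
          have h := hf (β (Φ x (xb i))) (av i)
          rw [RingEquiv.symm_apply_apply] at h
          exact h
      _ = β (Φ x (∑ i, ((f (av i) : A) * xb i))) := by
          rw [map_sum, map_sum]
          refine Finset.sum_congr rfl fun i _ => ?_
          have hc : ((f (av i) : A)) = ((β (β.symm (f (av i))) : A)) := by
            rw [RingEquiv.apply_symm_apply]
          rw [hc, hΦBlin x (β.symm (f (av i))) (xb i), map_mul,
            RingEquiv.apply_symm_apply]
end

section
/- Let A be an (α,β)-Frobenius extension of B. A map tr^R : A → B is a right trace map (i.e., satisfies the right-module analogues R3, R4 and is a (B,B)-bimodule map for the actions b·x·b' = α^{-1}(b) x β^{-1}(b')) if and only if tr^R = β ∘ tr^L ∘ α for some left trace map tr^L. -/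
section

variable {A : Type u} [Ring A] (B : Subring A) (α : A ≃+* A) (β : B ≃+* B)

/-- `A` is an `(α,β)`-Frobenius extension of `B`: `A` is finitely generated projective as
a left `B`-module and there is an `(A,B)`-bimodule isomorphism `A ≅ Hom_B(_β A_α, B)`. -/
def IsTwistedFrobeniusExtension : Prop :=
  Module.Finite B A ∧ Module.Projective B A ∧
    ∃ Φ : A → A →+ B,
      (∀ a a' : A, Φ (a + a') = Φ a + Φ a') ∧
      (∀ (a : A) (b : B) (x : A), Φ a ((β b : A) * x) = b * Φ a x) ∧
      (∀ (a a' x : A), Φ (a' * a) x = Φ a (x * α a')) ∧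
      (∀ (a : A) (b : B) (x : A), Φ (a * (b : A)) x = Φ a x * b) ∧
      (∀ a : A, (∀ x : A, Φ a x = 0) → a = 0) ∧
      (∀ f : A →+ B, (∀ (b : B) (x : A), f ((β b : A) * x) = b * f x) →
        ∃ a : A, ∀ x : A, f x = Φ a x)

/-- A left trace map: a `(B,B)`-bimodule map `_β A_α → B` satisfying conditions
L3 and L4. -/
def IsLeftTraceMap (tr : A →+ B) : Prop :=
  (∀ (b b' : B) (x : A), tr ((β b : A) * x * α (b' : A)) = b * tr x * b') ∧
  (∀ a : A, (∀ x : A, tr (x * a) = 0) → a = 0) ∧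
  (∀ f : A →+ B, (∀ (b : B) (x : A), f ((β b : A) * x) = b * f x) →
    ∃ a : A, ∀ x : A, f x = tr (x * a))

/-- A right trace map: a `(B,B)`-bimodule map `_{α⁻¹} A_{β⁻¹} → B` satisfying conditions
R3 and R4. -/
def IsRightTraceMap (tr : A →+ B) : Prop :=
  (∀ (b b' : B) (x : A), tr (α.symm (b : A) * x * (β.symm b' : A)) = b * tr x * b') ∧
  (∀ a : A, (∀ x : A, tr (a * x) = 0) → a = 0) ∧
  (∀ f : A →+ B, (∀ (b : B) (x : A), f (x * (β.symm b : A)) = f x * b) →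
    ∃ a : A, ∀ x : A, f x = tr (a * x))


set_option synthInstance.maxHeartbeats 1000000 in
set_option maxHeartbeats 1000000 in
private lemma dual_basis_exists (hfin : Module.Finite B A) (hproj : Module.Projective B A)
    (T : A →+ B) (hT : IsLeftTraceMap B α β T) :
    ∃ (n : ℕ) (v y : Fin n → A),
      ∀ x : A, x = ∑ i, ((β (T (x * y i)) : B) : A) * v i := by
  obtain ⟨n, v, hv⟩ := Module.Finite.exists_fin (R := B) (M := A)
  set π : (Fin n → B) →ₗ[B] A := Fintype.linearCombination B v with hπ
  have hsurj : Function.Surjective π := by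
    rw [← LinearMap.range_eq_top, hπ, Fintype.range_linearCombination, hv]
  obtain ⟨s, hs⟩ := Module.projective_lifting_property π LinearMap.id hsurj
  have hsx : ∀ x : A, ∑ i, ((s x i : A)) * v i = x := by
    intro x
    have := congrArg (fun g => g x) hs
    simpa [π, Fintype.linearCombination_apply, Subring.smul_def, smul_eq_mul] using this
  have hcoord : ∀ i : Fin n, ∃ a : A, ∀ x : A, β.symm (s x i) = T (x * a) := by
    intro i
    refine hT.2.2 (AddMonoidHom.mk' (fun x => β.symm (s x i)) ?_) ?_
    · intro x x'; show β.symm (s (x + x') i) = _; rw [map_add]; simp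
    · intro b x
      show β.symm (s ((β b : A) * x) i) = b * β.symm (s x i)
      have h1 : ((β b : A) * x) = (β b) • x := rfl
      rw [h1, map_smul]
      simp [map_mul]
  choose y hy using hcoord
  refine ⟨n, v, y, fun x => ?_⟩
  conv_lhs => rw [← hsx x]
  refine Finset.sum_congr rfl fun i _ => ?_
  have : s x i = β (T (x * y i)) := by
    rw [← hy i x]; simp
  rw [this]

private lemma trace_left_linear (T : A →+ B) (hT : IsLeftTraceMap B α β T) (b : B) (x : A) :
    T ((β b : A) * x) = b * T x := by
  have := hT.1 b 1 x
  simpa using this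

private lemma trace_right_linear (T : A →+ B) (hT : IsLeftTraceMap B α β T) (b : B) (x : A) :
    T (x * α (b : A)) = T x * b := by
  have := hT.1 1 b x
  simpa using this

private lemma left_trace_facts (hfin : Module.Finite B A) (hproj : Module.Projective B A)
    (T : A →+ B) (hT : IsLeftTraceMap B α β T) :
    (∀ c : A, (∀ x : A, T (c * x) = 0) → c = 0) ∧
    (∀ h : A →+ B, (∀ (b : B) (z : A), h (z * α (b : A)) = h z * b) →
      ∃ c : A, ∀ z : A, h z = T (c * z)) ∧
    (∃ (n : ℕ) (v y : Fin n → A), ∀ z : A, z = ∑ i, y i * α ((T (v i * z) : A))) := by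
  obtain ⟨n, v, y, hdb⟩ := dual_basis_exists B α β hfin hproj T hT
  have hC : ∀ z : A, z = ∑ i, y i * α ((T (v i * z) : A)) := by
    intro z
    have key : ∀ x : A, T (x * (∑ i, y i * α ((T (v i * z) : A)))) = T (x * z) := by
      intro x
      rw [Finset.mul_sum, map_sum]
      have lhs : ∀ i, T (x * (y i * α ((T (v i * z) : A)))) = T (x * y i) * T (v i * z) := by
        intro i
        rw [← mul_assoc]
        exact trace_right_linear B α β T hT _ _
      rw [Finset.sum_congr rfl fun i _ => lhs i]
      conv_rhs => rw [hdb x, Finset.sum_mul, map_sum]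
      refine (Finset.sum_congr rfl fun i _ => ?_).symm
      rw [mul_assoc]
      exact trace_left_linear B α β T hT _ _
    have : ∀ x : A, T (x * ((∑ i, y i * α ((T (v i * z) : A))) - z)) = 0 := by
      intro x
      rw [mul_sub, map_sub, key, sub_self]
    have := hT.2.1 _ this
    exact (sub_eq_zero.mp this).symm
  refine ⟨?_, ?_, n, v, y, hC⟩
  · intro c hc
    have := hdb c
    simp only [hc, map_zero] at this
    simpa using this
  · intro h hh
    refine ⟨∑ i, ((β (h (y i)) : B) : A) * v i, fun z => ?_⟩
    conv_lhs => rw [hC z, map_sum]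
    rw [Finset.sum_mul, map_sum]
    refine Finset.sum_congr rfl fun i _ => ?_
    rw [hh, mul_assoc]
    rw [trace_left_linear B α β T hT]

set_option synthInstance.maxHeartbeats 1000000 in
set_option maxHeartbeats 2000000 in
/-- Let `A` be an `(α,β)`-Frobenius extension of `B`.  A map `tr^R : A → B` is a right
trace map if and only if `tr^R = β ∘ tr^L ∘ α` for some left trace map `tr^L`. -/
theorem isRightTraceMap_iff_comp_leftTraceMap
    (hfrob : IsTwistedFrobeniusExtension B α β) (trR : A →+ B) :
    IsRightTraceMap B α β trR ↔
      ∃ trL : A →+ B, IsLeftTraceMap B α β trL ∧ ∀ x : A, trR x = β (trL (α x)) := by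
  obtain ⟨hfin, hproj, Φ, hΦadd, hΦ2, hΦ3, hΦ4, hΦ5, hΦ6⟩ := hfrob
  constructor
  · intro hR
    have key : ∀ (a x : A), Φ a x = Φ 1 (x * α a) := by
      intro a x
      have := hΦ3 1 a x
      simpa using this
    have er : ∀ (b : B) (w : A), Φ 1 (w * α (b : A)) = Φ 1 w * b := by
      intro b w
      have h1 := hΦ4 1 b w
      rw [one_mul] at h1
      rw [← key (b : A) w]
      exact h1
    have hE : IsLeftTraceMap B α β (Φ 1) := by
      refine ⟨?_, ?_, ?_⟩
      · intro b b' x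
        rw [er b' (((β b : B) : A) * x), hΦ2]
      · intro a ha
        have h5 : ∀ x, Φ (α.symm a) x = 0 := by
          intro x
          rw [key]
          simpa using ha x
        have h6 := hΦ5 _ h5
        calc a = α (α.symm a) := by simp
        _ = α 0 := by rw [h6]
        _ = 0 := by simp
      · intro f hf
        obtain ⟨a, haf⟩ := hΦ6 f hf
        exact ⟨α a, fun x => by rw [haf x, key]⟩
    obtain ⟨Endg, Esurj, n, v, y, hC⟩ := left_trace_facts B α β hfin hproj (Φ 1) hE
    have hRr : ∀ (b : B) (w : A), trR (w * ((β.symm b : B) : A)) = trR w * b := by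
      intro b w
      have := hR.1 1 b w
      simpa using this
    have hRl : ∀ (b : B) (w : A), trR (α.symm ((b : B) : A) * w) = b * trR w := by
      intro b w
      have := hR.1 b 1 w
      simpa using this
    have hp : ∀ i : Fin n, ∃ sc : A, ∀ z : A, β (Φ 1 (v i * α z)) = trR (sc * z) := by
      intro i
      refine hR.2.2 (AddMonoidHom.mk' (fun z => β (Φ 1 (v i * α z))) ?_) ?_
      · intro u w; simp [map_add, mul_add]
      · intro b x
        show β (Φ 1 (v i * α (x * ((β.symm b : B) : A)))) = β (Φ 1 (v i * α x)) * b
        have e : v i * α (x * ((β.symm b : B) : A))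
            = (v i * α x) * α ((β.symm b : B) : A) := by
          rw [map_mul, mul_assoc]
        rw [e, er, map_mul]
        simp
    choose s hs using hp
    have hstar : ∀ z : A, z = ∑ i, α.symm (y i) * ((β.symm (trR (s i * z)) : B) : A) := by
      intro z
      have e := congrArg α.symm (hC (α z))
      rw [map_sum] at e
      simp only [map_mul, RingEquiv.symm_apply_apply] at e
      refine e.trans (Finset.sum_congr rfl fun i _ => ?_)
      congr 1
      rw [← hs i z]
      simp
    have hC' : ∀ z : A, z = ∑ i, α.symm ((trR (z * α.symm (y i)) : A)) * s i := by
      intro z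
      have hzx : ∀ x : A,
          trR ((∑ i, α.symm ((trR (z * α.symm (y i)) : A)) * s i) * x) = trR (z * x) := by
        intro x
        rw [Finset.sum_mul, map_sum]
        have l1 : ∀ i ∈ Finset.univ,
            trR (α.symm ((trR (z * α.symm (y i)) : A)) * s i * x)
              = trR (z * α.symm (y i)) * trR (s i * x) := by
          intro i _
          rw [mul_assoc]
          exact hRl _ _
        rw [Finset.sum_congr rfl l1]
        have e2 : z * x = ∑ i, (z * α.symm (y i)) * ((β.symm (trR (s i * x)) : B) : A) := by
          conv_lhs => rw [hstar x, Finset.mul_sum]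
          exact Finset.sum_congr rfl fun i _ => by rw [mul_assoc]
        rw [e2, map_sum]
        exact Finset.sum_congr rfl fun i _ => (hRr _ _).symm
      have h0 : ∀ x : A,
          trR (((∑ i, α.symm ((trR (z * α.symm (y i)) : A)) * s i) - z) * x) = 0 := by
        intro x
        rw [sub_mul, map_sub, hzx, sub_self]
      exact (sub_eq_zero.mp (hR.2.1 _ h0)).symm
    refine ⟨AddMonoidHom.mk' (fun x => β.symm (trR (α.symm x)))
      (by intro u w; simp [map_add]), ⟨?_, ?_, ?_⟩, ?_⟩
    · intro b b' x
      show β.symm (trR (α.symm (((β b : B) : A) * x * α ((b' : B) : A))))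
        = b * β.symm (trR (α.symm x)) * b'
      have e : α.symm (((β b : B) : A) * x * α ((b' : B) : A))
          = α.symm ((β b : A)) * α.symm x * ((β.symm (β b') : B) : A) := by
        simp [map_mul]
      rw [e, hR.1]
      simp [map_mul]
    · intro a ha
      have h0 : ∀ w : A, trR (w * α.symm a) = 0 := by
        intro w
        have h1 : β.symm (trR (α.symm (α w * a))) = 0 := ha (α w)
        have h2 : trR (α.symm (α w * a)) = 0 := by
          have := congrArg β h1
          simpa using this
        simpa [map_mul] using h2
      have h4 : α.symm a = 0 := by
        rw [hstar (α.symm a)]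
        refine Finset.sum_eq_zero fun i _ => ?_
        rw [h0 (s i)]
        simp
      calc a = α (α.symm a) := by simp
      _ = α 0 := by rw [h4]
      _ = 0 := by simp
    · intro f hf
      have hG : ∀ (b : B) (z : A), β (f (α (α.symm ((b : B) : A) * z))) = b * β (f (α z)) := by
        intro b z
        have e : α (α.symm ((b : B) : A) * z) = ((β (β.symm b) : B) : A) * α z := by
          simp [map_mul]
        rw [e, hf (β.symm b)]
        simp [map_mul]
      have hGz : ∀ z : A, β (f (α z))
          = trR (z * (∑ i, α.symm (y i) * ((f (α (s i)) : B) : A))) := by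
        intro z
        conv_lhs => rw [hC' z]
        rw [map_sum, map_sum, map_sum]
        have e1 : ∀ i ∈ Finset.univ,
            β (f (α (α.symm ((trR (z * α.symm (y i)) : A)) * s i)))
              = trR (z * α.symm (y i)) * β (f (α (s i))) := fun i _ => hG _ _
        rw [Finset.sum_congr rfl e1]
        have e2 : ∀ i ∈ Finset.univ, trR (z * α.symm (y i)) * β (f (α (s i)))
            = trR (z * (α.symm (y i) * ((f (α (s i)) : B) : A))) := by
          intro i _
          rw [← mul_assoc, ← hRr (β (f (α (s i))))]
          simp
        rw [Finset.sum_congr rfl e2, ← map_sum, ← Finset.mul_sum]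
      refine ⟨α (∑ i, α.symm (y i) * ((f (α (s i)) : B) : A)), fun x => ?_⟩
      show f x = β.symm (trR (α.symm (x * α (∑ i, α.symm (y i) * ((f (α (s i)) : B) : A)))))
      have h7 := hGz (α.symm x)
      simp only [RingEquiv.apply_symm_apply] at h7
      have h8 := congrArg β.symm h7
      simp only [RingEquiv.symm_apply_apply] at h8
      have e3 : α.symm (x * α (∑ i, α.symm (y i) * ((f (α (s i)) : B) : A)))
          = α.symm x * (∑ i, α.symm (y i) * ((f (α (s i)) : B) : A)) := by
        simp [map_mul]
      rw [e3]
      exact h8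
    · intro x
      show trR x = β (β.symm (trR (α.symm (α x))))
      simp
  · rintro ⟨trL, hL, heq⟩
    obtain ⟨hnd, hsurj, -⟩ := left_trace_facts B α β hfin hproj trL hL
    refine ⟨?_, ?_, ?_⟩
    · intro b b' x
      rw [heq]
      have e1 : α (α.symm (b : A) * x * ((β.symm b' : B) : A))
          = ((β (β.symm b) : B) : A) * α x * α ((β.symm b' : B) : A) := by
        simp [map_mul]
      rw [e1, hL.1, heq]
      simp [map_mul]
    · intro a ha
      have h0 : ∀ w : A, trL (α a * w) = 0 := by
        intro w
        have h1 := ha (α.symm w)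
        rw [heq] at h1
        have h2 : α (a * α.symm w) = α a * w := by simp [map_mul]
        rw [h2] at h1
        apply β.injective
        simpa using h1
      have h3 := hnd (α a) h0
      apply α.injective
      simpa using h3
    · intro f hf
      have hh : ∀ (b : B) (z : A),
          (fun z => β.symm (f (α.symm z))) (z * α ((b : B) : A))
            = (fun z => β.symm (f (α.symm z))) z * b := by
        intro b z
        show β.symm (f (α.symm (z * α (b : A)))) = β.symm (f (α.symm z)) * b
        have e : α.symm (z * α (b : A)) = α.symm z * ((β.symm (β b) : B) : A) := by
          simp [map_mul]
        rw [e, hf (β b)]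
        simp [map_mul]
      obtain ⟨c, hc⟩ := hsurj (AddMonoidHom.mk' (fun z => β.symm (f (α.symm z)))
        (by intro u w; simp [map_add])) hh
      refine ⟨α.symm c, fun x => ?_⟩
      have h4 : f x = β ((AddMonoidHom.mk' (fun z => β.symm (f (α.symm z)))
          (by intro u w; simp [map_add]) : A →+ B) (α x)) := by
        show f x = β (β.symm (f (α.symm (α x)))); simp
      rw [h4, hc, heq]
      have : α (α.symm c * x) = c * α x := by simp [map_mul]
      rw [this]

end
end

section
/- Let B ⊆ A be rings, α an automorphism of A, β an automorphism of B. Then A is an (α,β)-Frobenius extension of B if and only if there exist a (B,B)-bimodule map tr : _β A_α → B and finite subsets {x_1,...,x_n}, {y_1,...,y_n} of A such that for all a ∈ A: a = Σ_{i=1}^n β(tr(a y_i)) x_i and a = Σ_{i=1}^n α^{-1}(y_i) tr(x_i α(a)). -/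
section

variable {A : Type u} [Ring A] (B : Subring A) (α : A ≃+* A) (β : B ≃+* B)

set_option maxHeartbeats 1000000 in
set_option synthInstance.maxHeartbeats 400000 in
/-- `A` is an `(α,β)`-Frobenius extension of `B` if and only if there exist a
`(B,B)`-bimodule map `tr : _β A_α → B` and finite subsets `{x 1,...,x n}`,
`{y 1,...,y n}` of `A` (dual sets of generators) such that for all `a ∈ A`:
`a = Σ i, β(tr(a y i)) x i` and `a = Σ i, α⁻¹(y i) tr(x i α(a))`. -/
theorem isTwistedFrobeniusExtension_iff_dual_generators :
    IsTwistedFrobeniusExtension B α β ↔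
      ∃ (tr : A →+ B) (n : ℕ) (x y : Fin n → A),
        (∀ (b b' : B) (z : A), tr ((β b : A) * z * α (b' : A)) = b * tr z * b') ∧
        (∀ a : A, a = ∑ i, ((β (tr (a * y i)) : B) : A) * x i) ∧
        (∀ a : A, a = ∑ i, α.symm (y i) * ((tr (x i * α a) : B) : A)) := by
  constructor
  · rintro ⟨hfin, hproj, Φ, hadd, hB, hA, hBr, hinj, hsurj⟩
    obtain ⟨n, v, hv⟩ := Module.Finite.exists_fin (R := B) (M := A)
    -- the surjection from a free module and its splitting
    let π : (Fin n → B) →ₗ[B] A :=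
      { toFun := fun c => ∑ i, c i • v i
        map_add' := fun c d => by
          simp [add_smul, Finset.sum_add_distrib]
        map_smul' := fun b c => by
          simp [mul_smul, Finset.smul_sum] }
    have hπ : Function.Surjective π := by
      intro a
      have ha : a ∈ Submodule.span B (Set.range v) := hv ▸ Submodule.mem_top
      obtain ⟨c, hc⟩ := (Submodule.mem_span_range_iff_exists_fun B).mp ha
      exact ⟨c, hc⟩
    obtain ⟨σ, hσ⟩ := Module.projective_lifting_property π LinearMap.id hπ
    have hσ' : ∀ a : A, ∑ i, ((σ a i : B) : A) * v i = a := by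
      intro a
      have := congrArg (fun f : A →ₗ[B] A => f a) hσ
      simpa [π, Subring.smul_def] using this
    -- the twisted-linear coordinate functionals, realized via Φ
    have hexists : ∀ i : Fin n, ∃ c : A, ∀ z : A, β.symm (σ z i) = Φ c z := by
      intro i
      refine hsurj (AddMonoidHom.mk' (fun z => β.symm (σ z i)) ?_) ?_
      · intro z w
        simp [map_add]
      · intro b z
        show β.symm (σ (((β b : B) : A) * z) i) = b * β.symm (σ z i)
        have hsm : ((β b : B) : A) * z = (β b) • z := rfl
        rw [hsm, map_smul]
        show β.symm ((β b • σ z) i) = b * β.symm (σ z i)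
        simp [Pi.smul_apply, smul_eq_mul, map_mul]
    choose c hc using hexists
    -- the trace
    refine ⟨Φ 1, n, v, fun i => α (c i), ?_, ?_, ?_⟩
    · -- bimodule property
      have trα : ∀ (w : A) (b' : B), Φ 1 (w * α (b' : A)) = Φ 1 w * b' := by
        intro w b'
        have h := hA 1 (b' : A) w
        have h2 := hBr 1 b' w
        rw [mul_one] at h
        rw [one_mul] at h2
        rw [← h, h2]
      intro b b' z
      rw [trα ((β b : A) * z) b', hB 1 b z]
    · -- first dual-basis identity
      intro a
      have key : ∀ i, (β (Φ 1 (a * α (c i))) : A) = ((σ a i : B) : A) := by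
        intro i
        have h := hA 1 (c i) a
        rw [mul_one] at h
        rw [← h, ← hc i a]
        simp
      calc a = ∑ i, ((σ a i : B) : A) * v i := (hσ' a).symm
        _ = ∑ i, (β (Φ 1 (a * α (c i))) : A) * v i := by
              refine Finset.sum_congr rfl fun i _ => ?_
              rw [key i]
    · -- second dual-basis identity
      intro a
      have keyΦ : ∀ i, Φ 1 (v i * α a) = Φ a (v i) := by
        intro i
        have h := hA 1 a (v i)
        rw [mul_one] at h
        exact h.symm
      -- bundle Φ as an additive hom in the first variable
      let Φ' : A →+ (A →+ B) := AddMonoidHom.mk' Φ hadd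
      have hΦ' : ∀ a, Φ' a = Φ a := fun _ => rfl
      set s : A := ∑ i, c i * ((Φ a (v i) : B) : A) with hs
      have hzero : ∀ z : A, Φ (a - s) z = 0 := by
        intro z
        have e1 : Φ s z = ∑ i, β.symm (σ z i) * Φ a (v i) := by
          have : Φ' s z = ∑ i, Φ' (c i * ((Φ a (v i) : B) : A)) z := by
            rw [hs, map_sum]
            simp [AddMonoidHom.finset_sum_apply]
          rw [hΦ'] at this
          rw [this]
          refine Finset.sum_congr rfl fun i _ => ?_
          rw [hΦ', hBr (c i) (Φ a (v i)) z, ← hc i z]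
        have e2 : Φ a z = ∑ i, β.symm (σ z i) * Φ a (v i) := by
          conv_lhs => rw [← hσ' z]
          rw [map_sum]
          refine Finset.sum_congr rfl fun i _ => ?_
          have : ((σ z i : B) : A) = ((β (β.symm (σ z i)) : B) : A) := by simp
          rw [this, hB a (β.symm (σ z i)) (v i)]
        have hsub : Φ (a - s) z = Φ a z - Φ s z :=
          congrArg (fun g : A →+ B => g z) (map_sub Φ' a s)
        rw [hsub, e1, e2, sub_self]
      have := hinj (a - s) hzero
      have ha : a = s := by
        have := sub_eq_zero.mp this
        exact this
      calc a = s := ha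
        _ = ∑ i, α.symm (α (c i)) * ((Φ 1 (v i * α a) : B) : A) := by
              rw [hs]
              refine Finset.sum_congr rfl fun i _ => ?_
              rw [RingEquiv.symm_apply_apply, keyΦ i]
  · rintro ⟨tr, n, x, y, h1, h2, h3⟩
    have trL : ∀ (b : B) (z : A), tr ((β b : A) * z) = b * tr z := by
      intro b z
      have := h1 b 1 z
      simpa using this
    have trR : ∀ (z : A) (b : B), tr (z * α (b : A)) = tr z * b := by
      intro z b
      have := h1 1 b z
      simpa using this
    -- linear maps for finiteness/projectivity
    let σ : A →ₗ[B] (Fin n → B) :=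
      { toFun := fun a i => β (tr (a * y i))
        map_add' := fun a a' => by
          funext i
          simp [add_mul, map_add]
        map_smul' := fun b a => by
          funext i
          show β (tr ((b : A) * a * y i)) = b * β (tr (a * y i))
          have hb : (b : A) = ((β (β.symm b) : B) : A) := by simp
          rw [mul_assoc, hb, trL, map_mul, RingEquiv.apply_symm_apply] }
    let π : (Fin n → B) →ₗ[B] A :=
      { toFun := fun c => ∑ i, c i • x i
        map_add' := fun c d => by
          simp [add_smul, Finset.sum_add_distrib]
        map_smul' := fun b c => by
          simp [mul_smul, Finset.smul_sum] }
    have hsplit : π.comp σ = LinearMap.id := by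
      ext a
      show ∑ i, (β (tr (a * y i))) • x i = a
      exact (h2 a).symm
    have hπs : Function.Surjective π := by
      intro a
      exact ⟨σ a, congrArg (fun f : A →ₗ[B] A => f a) hsplit⟩
    refine ⟨Module.Finite.of_surjective π hπs, Module.Projective.of_split σ π hsplit,
      fun a => tr.comp (AddMonoidHom.mulRight (α a)), ?_, ?_, ?_, ?_, ?_, ?_⟩
    · intro a a'
      refine AddMonoidHom.ext fun z => ?_
      show tr (z * α (a + a')) = tr (z * α a) + tr (z * α a')
      rw [show α (a + a') = α a + α a' from map_add α a a', mul_add, map_add]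
    · intro a b z
      show tr ((β b : A) * z * α a) = b * tr (z * α a)
      rw [mul_assoc, trL]
    · intro a a' z
      show tr (z * α (a' * a)) = tr (z * α a' * α a)
      rw [show α (a' * a) = α a' * α a from map_mul α a' a, mul_assoc]
    · intro a b z
      show tr (z * α (a * (b : A))) = tr (z * α a) * b
      rw [show α (a * (b : A)) = α a * α (b : A) from map_mul α a (b : A), ← mul_assoc, trR]
    · intro a ha
      have := h3 a
      have hzero : ∀ i, tr (x i * α a) = 0 := fun i => ha (x i)
      simp only [hzero] at this
      simpa using this
    · intro f hf
      refine ⟨∑ i, α.symm (y i) * ((f (x i) : B) : A), fun z => ?_⟩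
      show f z = tr (z * α (∑ i, α.symm (y i) * ((f (x i) : B) : A)))
      have hα : α (∑ i, α.symm (y i) * ((f (x i) : B) : A))
          = ∑ i, y i * α ((f (x i) : B) : A) := by
        rw [map_sum]
        refine Finset.sum_congr rfl fun i _ => ?_
        rw [map_mul, RingEquiv.apply_symm_apply]
      rw [hα, Finset.mul_sum, map_sum]
      have e1 : ∀ i, tr (z * (y i * α ((f (x i) : B) : A))) = tr (z * y i) * f (x i) := by
        intro i
        rw [← mul_assoc, trR]
      simp only [e1]
      conv_lhs => rw [h2 z]
      rw [map_sum]
      refine Finset.sum_congr rfl fun i _ => ?_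
      rw [hf (tr (z * y i)) (x i)]

end
end

section
/- Let A be an (α,β)-Frobenius extension of B with dual sets of generators {x_i}, {y_i} and trace map tr (so a = Σ β(tr(a y_i)) x_i = Σ α^{-1}(y_i) tr(x_i α(a)) for all a). Then the element e := Σ_{i=1}^n α^{-1}(y_i) ⊗ x_i ∈ A ⊗_B (_β A) is a Casimir element: a'·e = e·a' for all a' ∈ A, where the left A-action is on the first tensor factor and the right A-action on the second factor is a'' · a' = a''α(a'). -/
/-- Let `A` be an `(α,β)`-Frobenius extension of `B` with dual sets of generators
`{x i}`, `{y i}` and trace map `tr` (so `a = Σ β(tr(a y i)) x i = Σ α⁻¹(y i) tr(x i α(a))`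
for all `a`).  Then the element `e := Σ i, α⁻¹(y i) ⊗ x i ∈ A ⊗_B (_β A)` is a Casimir
element: `a' · e = e · a'` for all `a' ∈ A`, where the left `A`-action is on the first
tensor factor and the right `A`-action on the second factor is twisted by `α`.
Equality in the tensor product `A ⊗_B (_β A)` is expressed by evaluating against all
`B`-balanced biadditive maps `φ` (balanced meaning `φ(z b, w) = φ(z, β(b) w)`). -/
theorem casimir_element_of_dual_generators
    {A : Type u} [Ring A] (B : Subring A) (α : A ≃+* A) (β : B ≃+* B)
    (tr : A →+ B)
    (htrbimod : ∀ (b b' : B) (z : A), tr ((β b : A) * z * α (b' : A)) = b * tr z * b')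
    (n : ℕ) (x y : Fin n → A)
    (hdual₁ : ∀ a : A, a = ∑ i, ((β (tr (a * y i)) : B) : A) * x i)
    (hdual₂ : ∀ a : A, a = ∑ i, α.symm (y i) * ((tr (x i * α a) : B) : A)) :
    ∀ (M : Type v) [AddCommGroup M] (φ : A →+ A →+ M),
      (∀ (z w : A) (b : B), φ (z * (b : A)) w = φ z ((β b : A) * w)) →
      ∀ a' : A, ∑ i, φ (a' * α.symm (y i)) (x i) = ∑ i, φ (α.symm (y i)) (x i * α a') := by
  intro M _ φ hφ a'
  have key : ∀ j, φ (a' * α.symm (y j)) (x j)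
      = ∑ i, φ (α.symm (y i)) (((β (tr (x i * α a' * y j)) : B) : A) * x j) := by
    intro j
    conv_lhs => rw [hdual₂ (a' * α.symm (y j))]
    rw [map_sum, AddMonoidHom.finset_sum_apply]
    refine Finset.sum_congr rfl fun i _ => ?_
    rw [hφ]
    have h : x i * α (a' * α.symm (y j)) = x i * α a' * y j := by
      rw [map_mul, RingEquiv.apply_symm_apply, mul_assoc]
    rw [h]
  calc ∑ j, φ (a' * α.symm (y j)) (x j)
      = ∑ j, ∑ i, φ (α.symm (y i)) (((β (tr (x i * α a' * y j)) : B) : A) * x j) :=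
        Finset.sum_congr rfl fun j _ => key j
    _ = ∑ i, ∑ j, φ (α.symm (y i)) (((β (tr (x i * α a' * y j)) : B) : A) * x j) :=
        Finset.sum_comm
    _ = ∑ i, φ (α.symm (y i)) (x i * α a') := by
        refine Finset.sum_congr rfl fun i _ => ?_
        rw [← map_sum, ← hdual₁ (x i * α a')]
end

section
/- Let A be an (α,β)-Frobenius extension of B with trace map tr. For every c in the centralizer C_A(B), there exists a unique element ψ(c) ∈ A such that tr(cx) = tr(x·ψ(c)) for all x ∈ A, and the resulting map ψ : C_A(B) → A is injective with image contained in the centralizer C_A(α(B)). -/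
set_option synthInstance.maxHeartbeats 400000
set_option maxHeartbeats 1000000

/-- Left nondegeneracy of the trace form, derived from right nondegeneracy,
surjectivity onto twisted-linear functionals, and finite projectivity. -/
theorem left_nondeg {A : Type u} [Ring A] (B : Subring A) (β : B ≃+* B)
    (hfin : Module.Finite B A) (hproj : Module.Projective B A)
    (tr : A →+ B)
    (htrsurj : ∀ f : A →+ B, (∀ (b : B) (x : A), f ((β b : A) * x) = b * f x) →
      ∃ a : A, ∀ x : A, f x = tr (x * a)) :
    ∀ d : A, (∀ x : A, tr (d * x) = 0) → d = 0 := by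
  obtain ⟨n, v, hv⟩ := Module.Finite.exists_fin (R := B) (M := A)
  set π : (Fin n → B) →ₗ[B] A := Fintype.linearCombination B v with hπdef
  have hπ : Function.Surjective π := by
    rw [← LinearMap.range_eq_top, hπdef, Fintype.range_linearCombination, hv]
  obtain ⟨s, hs⟩ := Module.projective_lifting_property π LinearMap.id hπ
  intro d hd
  have key : ∀ i : Fin n, s d i = 0 := by
    intro i
    set g : A →+ B :=
      { toFun := fun x => β.symm (s x i)
        map_zero' := by simp
        map_add' := by intro x y; simp [map_add] } with hg
    have hglin : ∀ (b : B) (x : A), g ((β b : A) * x) = b * g x := by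
      intro b x
      have h1 : (β b : A) * x = (β b : B) • x := rfl
      simp only [hg, AddMonoidHom.coe_mk, ZeroHom.coe_mk, h1, map_smul,
        Pi.smul_apply, smul_eq_mul, map_mul, RingEquiv.symm_apply_apply]
    obtain ⟨a, ha⟩ := htrsurj g hglin
    have : g d = 0 := by rw [ha d, hd a]
    have h2 : β.symm (s d i) = 0 := this
    have := congrArg β h2
    simpa using this
  have hsd : s d = 0 := funext key
  have h3 : π (s d) = d := congrFun (congrArg (fun f => f.toFun) hs) d
  rw [hsd] at h3
  simpa using h3.symm

/-- Let `A` be an `(α,β)`-Frobenius extension of `B` with trace map `tr`.  For every `c`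
in the centralizer `C_A(B)`, there exists a unique element `ψ(c) ∈ A` such that
`tr(c x) = tr(x ψ(c))` for all `x ∈ A`; the resulting assignment is injective, and its
values lie in the centralizer `C_A(α(B))`. -/
theorem nakayama_exists_unique_injective
    {A : Type u} [Ring A] (B : Subring A) (α : A ≃+* A) (β : B ≃+* B)
    (hfin : Module.Finite B A) (hproj : Module.Projective B A)
    (tr : A →+ B)
    (htrbimod : ∀ (b b' : B) (x : A), tr ((β b : A) * x * α (b' : A)) = b * tr x * b')
    (htrnd : ∀ a : A, (∀ x : A, tr (x * a) = 0) → a = 0)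
    (htrsurj : ∀ f : A →+ B, (∀ (b : B) (x : A), f ((β b : A) * x) = b * f x) →
      ∃ a : A, ∀ x : A, f x = tr (x * a)) :
    -- existence and uniqueness of ψ(c) for each c ∈ C_A(B):
    (∀ c : A, (∀ b : B, c * (b : A) = (b : A) * c) →
      ∃! p : A, ∀ x : A, tr (c * x) = tr (x * p)) ∧
    -- injectivity of ψ:
    (∀ c c' p : A, (∀ b : B, c * (b : A) = (b : A) * c) →
      (∀ b : B, c' * (b : A) = (b : A) * c') →
      (∀ x : A, tr (c * x) = tr (x * p)) → (∀ x : A, tr (c' * x) = tr (x * p)) →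
      c = c') ∧
    -- the image lies in C_A(α(B)):
    (∀ c p : A, (∀ b : B, c * (b : A) = (b : A) * c) →
      (∀ x : A, tr (c * x) = tr (x * p)) →
      ∀ b : B, p * α (b : A) = α (b : A) * p) := by
  -- simplified bimodule identities
  have hleft : ∀ (b : B) (x : A), tr ((β b : A) * x) = b * tr x := by
    intro b x
    have := htrbimod b 1 x
    simpa using this
  have hright : ∀ (b : B) (x : A), tr (x * α (b : A)) = tr x * b := by
    intro b x
    have := htrbimod 1 b x
    simpa using this
  have hlnd := left_nondeg B β hfin hproj tr htrsurj
  refine ⟨?_, ?_, ?_⟩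
  · -- existence and uniqueness
    intro c hc
    set f : A →+ B :=
      { toFun := fun x => tr (c * x)
        map_zero' := by simp
        map_add' := by intro x y; simp [mul_add] } with hf
    have hflin : ∀ (b : B) (x : A), f ((β b : A) * x) = b * f x := by
      intro b x
      simp only [hf, AddMonoidHom.coe_mk, ZeroHom.coe_mk]
      rw [← mul_assoc, hc (β b), mul_assoc, hleft]
    obtain ⟨p, hp⟩ := htrsurj f hflin
    refine ⟨p, fun x => hp x, ?_⟩
    intro q hq
    have : ∀ x : A, tr (x * (q - p)) = 0 := by
      intro x
      rw [mul_sub, map_sub, ← hq x, ← hp x]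
      simp [hf]
    exact sub_eq_zero.mp (htrnd _ this)
  · -- injectivity
    intro c c' p hc hc' h h'
    have : ∀ x : A, tr ((c - c') * x) = 0 := by
      intro x
      rw [sub_mul, map_sub, h x, h' x, sub_self]
    have := hlnd _ this
    exact sub_eq_zero.mp this
  · -- values centralize α(B)
    intro c p hc hp b
    have key : ∀ x : A, tr (x * (p * α (b : A) - α (b : A) * p)) = 0 := by
      intro x
      have h1 : tr (x * (p * α (b : A))) = tr (c * x) * b := by
        rw [← mul_assoc, hright b (x * p), ← hp x]
      have h2 : tr (x * (α (b : A) * p)) = tr (c * x) * b := by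
        rw [← mul_assoc, ← hp (x * α (b : A))]
        rw [← mul_assoc, mul_assoc c x (α (b:A)), ← mul_assoc]
        exact hright b (c * x)
      rw [mul_sub, map_sub, h1, h2, sub_self]
    have := htrnd _ key
    exact sub_eq_zero.mp this
end

section
/- Let A be an (α,β)-Frobenius extension of B with trace map tr, and let ψ : C_A(B) → C_A(α(B)) be the map characterized by tr(cx) = tr(x ψ(c)) for all x ∈ A, c ∈ C_A(B). Then ψ is a ring isomorphism from C_A(B) onto C_A(α(B)): it is bijective, ψ(1) = 1, and ψ(c₁c₂) = ψ(c₁)ψ(c₂). -/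
set_option synthInstance.maxHeartbeats 1000000
set_option maxHeartbeats 1000000


/-- Let `A` be an `(α,β)`-Frobenius extension of `B` with trace map `tr`, and let
`ψ : C_A(B) → C_A(α(B))` be the map characterized by `tr(c x) = tr(x ψ(c))` for all
`x ∈ A`, `c ∈ C_A(B)` (here given as a function `ψ : A → A` satisfying this defining
property on the centralizer).  Then `ψ` is a ring isomorphism from `C_A(B)` onto
`C_A(α(B))`: it is additive and multiplicative on `C_A(B)`, sends `1` to `1`, maps
`C_A(B)` into `C_A(α(B))`, and is bijective onto `C_A(α(B))`. -/
theorem nakayama_ring_isomorphism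
    {A : Type u} [Ring A] (B : Subring A) (α : A ≃+* A) (β : B ≃+* B)
    (hfin : Module.Finite B A) (hproj : Module.Projective B A)
    (tr : A →+ B)
    (htrbimod : ∀ (b b' : B) (x : A), tr ((β b : A) * x * α (b' : A)) = b * tr x * b')
    (htrnd : ∀ a : A, (∀ x : A, tr (x * a) = 0) → a = 0)
    (htrsurj : ∀ f : A →+ B, (∀ (b : B) (x : A), f ((β b : A) * x) = b * f x) →
      ∃ a : A, ∀ x : A, f x = tr (x * a))
    (ψ : A → A)
    (hψ : ∀ c : A, (∀ b : B, c * (b : A) = (b : A) * c) →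
      ∀ x : A, tr (c * x) = tr (x * ψ c)) :
    -- ψ(1) = 1:
    ψ 1 = 1 ∧
    -- ψ is multiplicative on C_A(B):
    (∀ c₁ c₂ : A, (∀ b : B, c₁ * (b : A) = (b : A) * c₁) →
      (∀ b : B, c₂ * (b : A) = (b : A) * c₂) → ψ (c₁ * c₂) = ψ c₁ * ψ c₂) ∧
    -- ψ is additive on C_A(B):
    (∀ c₁ c₂ : A, (∀ b : B, c₁ * (b : A) = (b : A) * c₁) →
      (∀ b : B, c₂ * (b : A) = (b : A) * c₂) → ψ (c₁ + c₂) = ψ c₁ + ψ c₂) ∧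
    -- ψ maps C_A(B) into C_A(α(B)):
    (∀ c : A, (∀ b : B, c * (b : A) = (b : A) * c) →
      ∀ b : B, ψ c * α (b : A) = α (b : A) * ψ c) ∧
    -- ψ is injective on C_A(B):
    (∀ c₁ c₂ : A, (∀ b : B, c₁ * (b : A) = (b : A) * c₁) →
      (∀ b : B, c₂ * (b : A) = (b : A) * c₂) → ψ c₁ = ψ c₂ → c₁ = c₂) ∧
    -- ψ is surjective from C_A(B) onto C_A(α(B)):
    (∀ a : A, (∀ b : B, a * α (b : A) = α (b : A) * a) →
      ∃ c : A, (∀ b : B, c * (b : A) = (b : A) * c) ∧ ψ c = a) := by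
  classical
  -- basic one-sided trace identities
  have trR : ∀ (b : B) (x : A), tr ((β b : A) * x) = b * tr x := by
    intro b x
    have h := htrbimod b 1 x
    simpa using h
  have trL : ∀ (b : B) (x : A), tr (x * α (b : A)) = tr x * b := by
    intro b x
    have h := htrbimod 1 b x
    simpa using h
  -- uniqueness from right-nondegeneracy
  have uniq : ∀ a a' : A, (∀ x : A, tr (x * a) = tr (x * a')) → a = a' := by
    intro a a' h
    have := htrnd (a - a') (fun x => by rw [mul_sub, map_sub, h, sub_self])
    exact sub_eq_zero.mp this
  -- dual bases via finiteness and projectivity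
  obtain ⟨n, f, g, -, -, hfg⟩ := Module.Finite.exists_comp_eq_id_of_projective B A
  set xs : Fin n → A := fun i => f (Pi.single i 1) with hxs
  have hrep : ∀ i : Fin n, ∃ y : A, ∀ x : A, β.symm (g x i) = tr (x * y) := by
    intro i
    refine htrsurj ⟨⟨fun x => β.symm (g x i), by simp⟩, fun x y => by simp⟩ ?_
    intro b x
    have hg : g ((β b : A) * x) i = β b * g x i := by
      have h0 : ((β b : A) * x) = (β b) • x := rfl
      rw [h0, map_smul]
      rfl
    simp only [AddMonoidHom.coe_mk, ZeroHom.coe_mk]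
    rw [hg, map_mul, RingEquiv.symm_apply_apply]
  choose ys hys using hrep
  have hdual : ∀ z : A, z = ∑ i, ((β (tr (z * ys i)) : A)) * xs i := by
    intro z
    have h1 : f (g z) = z := DFunLike.congr_fun hfg z
    calc z = f (g z) := h1.symm
      _ = f (∑ i, Pi.single i (g z i)) := by rw [Finset.univ_sum_single]
      _ = ∑ i, f (Pi.single i (g z i)) := map_sum f _ _
      _ = ∑ i, ((β (tr (z * ys i)) : A)) * xs i := by
          refine Finset.sum_congr rfl fun i _ => ?_
          have h2 : g z i = β (tr (z * ys i)) := by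
            rw [← hys i z, RingEquiv.apply_symm_apply]
          rw [← h2]
          have h3 : Pi.single i (g z i) = (g z i) • (Pi.single i 1 : Fin n → B) := by
            funext j
            simp [Pi.single_apply]
          rw [h3, map_smul]
          rfl
  -- left nondegeneracy
  have lndeg : ∀ a : A, (∀ x : A, tr (a * x) = 0) → a = 0 := by
    intro a h
    have := hdual a
    simpa [h] using this
  -- the second dual-basis identity
  have hdual2 : ∀ z : A, z = ∑ i, ys i * α ((tr (xs i * z) : A)) := by
    intro z
    refine uniq _ _ fun w => ?_
    calc tr (w * z) = tr ((∑ i, ((β (tr (w * ys i)) : A)) * xs i) * z) := by rw [← hdual w]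
      _ = ∑ i, tr (((β (tr (w * ys i)) : A)) * (xs i * z)) := by
          rw [Finset.sum_mul, map_sum]
          exact Finset.sum_congr rfl fun i _ => by rw [mul_assoc]
      _ = ∑ i, tr (w * ys i) * tr (xs i * z) := Finset.sum_congr rfl fun i _ => trR _ _
      _ = ∑ i, tr ((w * ys i) * α ((tr (xs i * z) : A))) :=
          Finset.sum_congr rfl fun i _ => (trL _ _).symm
      _ = tr (w * ∑ i, ys i * α ((tr (xs i * z) : A))) := by
          rw [Finset.mul_sum, map_sum]
          exact Finset.sum_congr rfl fun i _ => by rw [mul_assoc]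
  -- ψ(1) = 1
  have h1c : ∀ b : B, (1 : A) * (b : A) = (b : A) * 1 := fun b => by rw [one_mul, mul_one]
  have hone : ψ 1 = 1 := uniq _ _ fun x => by rw [← hψ 1 h1c x, one_mul, mul_one]
  refine ⟨hone, ?_, ?_, ?_, ?_, ?_⟩
  · -- multiplicative
    intro c₁ c₂ hc₁ hc₂
    have h12 : ∀ b : B, (c₁ * c₂) * (b : A) = (b : A) * (c₁ * c₂) := fun b => by
      rw [mul_assoc, hc₂ b, ← mul_assoc, hc₁ b, mul_assoc]
    refine uniq _ _ fun x => ?_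
    calc tr (x * ψ (c₁ * c₂)) = tr ((c₁ * c₂) * x) := (hψ _ h12 x).symm
      _ = tr (c₁ * (c₂ * x)) := by rw [mul_assoc]
      _ = tr ((c₂ * x) * ψ c₁) := hψ c₁ hc₁ _
      _ = tr (c₂ * (x * ψ c₁)) := by rw [mul_assoc]
      _ = tr ((x * ψ c₁) * ψ c₂) := hψ c₂ hc₂ _
      _ = tr (x * (ψ c₁ * ψ c₂)) := by rw [mul_assoc]
  · -- additive
    intro c₁ c₂ hc₁ hc₂
    have h12 : ∀ b : B, (c₁ + c₂) * (b : A) = (b : A) * (c₁ + c₂) := fun b => by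
      rw [add_mul, mul_add, hc₁ b, hc₂ b]
    refine uniq _ _ fun x => ?_
    calc tr (x * ψ (c₁ + c₂)) = tr ((c₁ + c₂) * x) := (hψ _ h12 x).symm
      _ = tr (c₁ * x) + tr (c₂ * x) := by rw [add_mul, map_add]
      _ = tr (x * ψ c₁) + tr (x * ψ c₂) := by rw [hψ c₁ hc₁ x, hψ c₂ hc₂ x]
      _ = tr (x * (ψ c₁ + ψ c₂)) := by rw [mul_add, map_add]
  · -- into the centralizer of α(B)
    intro c hc b
    refine uniq _ _ fun x => ?_
    calc tr (x * (ψ c * α (b : A))) = tr ((x * ψ c) * α (b : A)) := by rw [mul_assoc]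
      _ = tr (x * ψ c) * b := trL b _
      _ = tr (c * x) * b := by rw [← hψ c hc x]
      _ = tr ((c * x) * α (b : A)) := (trL b _).symm
      _ = tr (c * (x * α (b : A))) := by rw [mul_assoc]
      _ = tr ((x * α (b : A)) * ψ c) := hψ c hc _
      _ = tr (x * (α (b : A) * ψ c)) := by rw [mul_assoc]
  · -- injective
    intro c₁ c₂ hc₁ hc₂ he
    have h0 : ∀ x : A, tr ((c₁ - c₂) * x) = 0 := fun x => by
      rw [sub_mul, map_sub, hψ c₁ hc₁ x, hψ c₂ hc₂ x, he, sub_self]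
    exact sub_eq_zero.mp (lndeg _ h0)
  · -- surjective
    intro a ha
    set c : A := ∑ i, ((β (tr (ys i * a)) : A)) * xs i with hc
    have key : ∀ x : A, tr (c * x) = tr (x * a) := by
      intro x
      have l1 : tr (c * x) = ∑ i, tr (ys i * a) * tr (xs i * x) := by
        rw [hc, Finset.sum_mul, map_sum]
        refine Finset.sum_congr rfl fun i _ => ?_
        rw [mul_assoc]
        exact trR _ _
      have l2 : tr (x * a) = ∑ i, tr (ys i * a) * tr (xs i * x) := by
        conv_lhs => rw [hdual2 x]
        rw [Finset.sum_mul, map_sum]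
        refine Finset.sum_congr rfl fun i _ => ?_
        rw [mul_assoc, ← ha (tr (xs i * x)), ← mul_assoc]
        exact trL _ _
      rw [l1, l2]
    have hcc : ∀ b : B, c * (b : A) = (b : A) * c := by
      intro b
      refine sub_eq_zero.mp (lndeg _ fun x => ?_)
      rw [sub_mul, map_sub, sub_eq_zero]
      calc tr ((c * (b : A)) * x) = tr (c * ((b : A) * x)) := by rw [mul_assoc]
        _ = tr (((b : A) * x) * a) := key _
        _ = tr (((β (β.symm b) : B) : A) * (x * a)) := by
            rw [RingEquiv.apply_symm_apply, mul_assoc]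
        _ = β.symm b * tr (x * a) := trR _ _
        _ = β.symm b * tr (c * x) := by rw [key]
        _ = tr (((β (β.symm b) : B) : A) * (c * x)) := (trR _ _).symm
        _ = tr (((b : A) * c) * x) := by rw [RingEquiv.apply_symm_apply, mul_assoc]
    exact ⟨c, hcc, uniq _ _ fun x => by rw [← hψ c hcc x, key]⟩
end

section
/- Let A be an (α,β)-Frobenius extension of B with trace maps tr₁ and tr₂, and associated Nakayama isomorphisms ψ₁, ψ₂ : C_A(B) → C_A(α(B)). Then there exists an invertible element a ∈ C_A(α(B)) such that ψ₂(c) = a ψ₁(c) a^{-1} for all c ∈ C_A(B). -/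
/-- Let `A` be an `(α,β)`-Frobenius extension of `B` with trace maps `tr₁` and `tr₂`,
and associated Nakayama isomorphisms `ψ₁, ψ₂ : C_A(B) → C_A(α(B))` (characterized by
`trᵢ(c x) = trᵢ(x ψᵢ(c))` for all `x ∈ A`, `c ∈ C_A(B)`).  Then there exists an
invertible element `a ∈ C_A(α(B))` such that `ψ₂(c) = a ψ₁(c) a⁻¹` for all
`c ∈ C_A(B)`. -/
theorem nakayama_isomorphisms_conjugate
    {A : Type u} [Ring A] (B : Subring A) (α : A ≃+* A) (β : B ≃+* B)
    (hfin : Module.Finite B A) (hproj : Module.Projective B A)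
    (tr₁ tr₂ : A →+ B)
    (htr₁bimod : ∀ (b b' : B) (x : A), tr₁ ((β b : A) * x * α (b' : A)) = b * tr₁ x * b')
    (htr₁nd : ∀ a : A, (∀ x : A, tr₁ (x * a) = 0) → a = 0)
    (htr₁surj : ∀ f : A →+ B, (∀ (b : B) (x : A), f ((β b : A) * x) = b * f x) →
      ∃ a : A, ∀ x : A, f x = tr₁ (x * a))
    (htr₂bimod : ∀ (b b' : B) (x : A), tr₂ ((β b : A) * x * α (b' : A)) = b * tr₂ x * b')
    (htr₂nd : ∀ a : A, (∀ x : A, tr₂ (x * a) = 0) → a = 0)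
    (htr₂surj : ∀ f : A →+ B, (∀ (b : B) (x : A), f ((β b : A) * x) = b * f x) →
      ∃ a : A, ∀ x : A, f x = tr₂ (x * a))
    (ψ₁ ψ₂ : A → A)
    (hψ₁ : ∀ c : A, (∀ b : B, c * (b : A) = (b : A) * c) →
      ∀ x : A, tr₁ (c * x) = tr₁ (x * ψ₁ c))
    (hψ₂ : ∀ c : A, (∀ b : B, c * (b : A) = (b : A) * c) →
      ∀ x : A, tr₂ (c * x) = tr₂ (x * ψ₂ c)) :
    ∃ a a' : A, a * a' = 1 ∧ a' * a = 1 ∧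
      (∀ b : B, a * α (b : A) = α (b : A) * a) ∧
      ∀ c : A, (∀ b : B, c * (b : A) = (b : A) * c) → ψ₂ c = a * ψ₁ c * a' := by
  -- tr₂ x = tr₁ (x * a) for some a
  obtain ⟨a, ha⟩ := htr₁surj tr₂ (fun b x => by simpa using htr₂bimod b 1 x)
  -- tr₁ x = tr₂ (x * a') for some a'
  obtain ⟨a', ha'⟩ := htr₂surj tr₁ (fun b x => by simpa using htr₁bimod b 1 x)
  have haa' : a * a' = 1 := by
    refine sub_eq_zero.mp (htr₂nd _ fun x => ?_)
    have h1 : tr₂ (x * (a * a')) = tr₂ x := by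
      rw [← mul_assoc, ← ha' (x * a), ← ha x]
    rw [mul_sub, map_sub, h1, mul_one, sub_self]
  have ha'a : a' * a = 1 := by
    refine sub_eq_zero.mp (htr₁nd _ fun x => ?_)
    have h1 : tr₁ (x * (a' * a)) = tr₁ x := by
      rw [← mul_assoc, ← ha (x * a'), ← ha' x]
    rw [mul_sub, map_sub, h1, mul_one, sub_self]
  have hcomm : ∀ b : B, a * α (b : A) = α (b : A) * a := by
    intro b
    refine sub_eq_zero.mp (htr₁nd _ fun x => ?_)
    have h1 : tr₁ (x * (α (b : A) * a)) = tr₂ x * b := by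
      rw [← mul_assoc, ← ha (x * α (b : A))]
      simpa using htr₂bimod 1 b x
    have h2 : tr₁ (x * (a * α (b : A))) = tr₂ x * b := by
      rw [← mul_assoc]
      have := htr₁bimod 1 b (x * a)
      simp only [OneMemClass.coe_one, map_one, one_mul] at this
      rw [this, ← ha x]
    rw [mul_sub, map_sub, h1, h2, sub_self]
  refine ⟨a, a', haa', ha'a, hcomm, fun c hc => ?_⟩
  have key : ψ₂ c * a = a * ψ₁ c := by
    refine sub_eq_zero.mp (htr₁nd _ fun x => ?_)
    have h1 : tr₁ (x * (ψ₂ c * a)) = tr₂ (c * x) := by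
      rw [← mul_assoc, ← ha (x * ψ₂ c), ← hψ₂ c hc x]
    have h2 : tr₁ (x * (a * ψ₁ c)) = tr₂ (c * x) := by
      rw [← mul_assoc, ← hψ₁ c hc (x * a), ← mul_assoc, ← ha (c * x)]
    rw [mul_sub, map_sub, h1, h2, sub_self]
  calc ψ₂ c = ψ₂ c * a * a' := by rw [mul_assoc, haa', mul_one]
    _ = a * ψ₁ c * a' := by rw [key]
end

section
/- Let A be an (α,β)-Frobenius extension of B with trace map tr and dual sets of generators {x_1,...,x_n}, {y_1,...,y_n}. Then the Nakayama isomorphism ψ associated to tr satisfies ψ(a) = Σ_{i=1}^n y_i α(tr(a x_i)) for all a ∈ C_A(B), and its inverse satisfies ψ^{-1}(a) = Σ_{i=1}^n β(tr(y_i a)) x_i for all a ∈ C_A(α(B)). -/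
/-- Let `A` be an `(α,β)`-Frobenius extension of `B` with trace map `tr` and dual sets of
generators `{x i}`, `{y i}` (so `a = Σ β(tr(a y i)) x i = Σ α⁻¹(y i) tr(x i α(a))` for
all `a ∈ A`).  Then the Nakayama isomorphism `ψ` associated to `tr` (characterized by
`tr(c x) = tr(x ψ(c))` for all `x`) is given explicitly by
`ψ(a) = Σ i, y i * α(tr(a * x i))` for `a ∈ C_A(B)`, and its inverse by
`ψ⁻¹(a) = Σ i, β(tr(y i * a)) * x i` for `a ∈ C_A(α(B))` (the latter expressed through
the defining property of `ψ`). -/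
theorem nakayama_explicit_formula
    {A : Type u} [Ring A] (B : Subring A) (α : A ≃+* A) (β : B ≃+* B)
    (tr : A →+ B)
    (htrbimod : ∀ (b b' : B) (z : A), tr ((β b : A) * z * α (b' : A)) = b * tr z * b')
    (htrnd : ∀ a : A, (∀ x : A, tr (x * a) = 0) → a = 0)
    (htrsurj : ∀ f : A →+ B, (∀ (b : B) (x : A), f ((β b : A) * x) = b * f x) →
      ∃ a : A, ∀ x : A, f x = tr (x * a))
    (n : ℕ) (x y : Fin n → A)
    (hdual₁ : ∀ a : A, a = ∑ i, ((β (tr (a * y i)) : B) : A) * x i)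
    (hdual₂ : ∀ a : A, a = ∑ i, α.symm (y i) * ((tr (x i * α a) : B) : A)) :
    -- explicit formula for ψ on C_A(B):
    (∀ a : A, (∀ b : B, a * (b : A) = (b : A) * a) →
      ∀ z : A, tr (a * z) = tr (z * (∑ i, y i * α ((tr (a * x i) : B) : A)))) ∧
    -- explicit formula for ψ⁻¹ on C_A(α(B)):
    (∀ a : A, (∀ b : B, a * α (b : A) = α (b : A) * a) →
      ∀ z : A, tr ((∑ i, ((β (tr (y i * a)) : B) : A) * x i) * z) = tr (z * a)) := by
  have h1 : ∀ (b : B) (w : A), tr ((β b : A) * w) = b * tr w := by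
    intro b w
    have := htrbimod b 1 w
    simpa using this
  have h2 : ∀ (b : B) (w : A), tr (w * α (b : A)) = tr w * b := by
    intro b w
    have := htrbimod 1 b w
    simpa using this
  constructor
  · intro a ha z
    have lhs : tr (a * z) = ∑ i, tr (z * y i) * tr (a * x i) := by
      conv_lhs => rw [hdual₁ z]
      rw [Finset.mul_sum, map_sum]
      refine Finset.sum_congr rfl fun i _ => ?_
      rw [show a * (((β (tr (z * y i)) : B) : A) * x i)
            = ((β (tr (z * y i)) : B) : A) * (a * x i) by
          rw [← mul_assoc, ha, mul_assoc], h1]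
    have rhs : tr (z * ∑ i, y i * α ((tr (a * x i) : B) : A))
        = ∑ i, tr (z * y i) * tr (a * x i) := by
      rw [Finset.mul_sum, map_sum]
      refine Finset.sum_congr rfl fun i _ => ?_
      rw [← mul_assoc, h2]
    rw [lhs, rhs]
  · intro a ha z
    have hz : z = ∑ i, y i * α ((tr (x i * z) : B) : A) := by
      have h := congrArg α (hdual₂ (α.symm z))
      simpa [map_sum, map_mul] using h
    have rhs : tr (z * a) = ∑ i, tr (y i * a) * tr (x i * z) := by
      conv_lhs => rw [hz]
      rw [Finset.sum_mul, map_sum]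
      refine Finset.sum_congr rfl fun i _ => ?_
      rw [mul_assoc, ← ha, ← mul_assoc, h2]
    have lhs : tr ((∑ i, ((β (tr (y i * a)) : B) : A) * x i) * z)
        = ∑ i, tr (y i * a) * tr (x i * z) := by
      rw [Finset.sum_mul, map_sum]
      refine Finset.sum_congr rfl fun i _ => ?_
      rw [mul_assoc, h1]
    rw [lhs, rhs]
end

section
/- Let B ⊆ A be rings, α an automorphism of A, β an automorphism of B. If the induction functor A ⊗_B − is right adjoint to the twisted restriction functor _β A_α ⊗_A −, with unit η : A → A ⊗_B (_β A_α) and counit ε : (_β A_α) ⊗_A A → B satisfying the triangle identities, then, writing η(1) = Σ_i y'_i ⊗ x_i and defining tr(a) = ε(a ⊗ 1), the elements {x_i} and {y_i := α(y'_i)} are dual sets of generators: a = Σ_i β(tr(a y_i)) x_i = Σ_i α^{-1}(y_i) tr(x_i α(a)) for all a ∈ A. In particular A is an (α,β)-Frobenius extension of B. -/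
section

variable {A : Type u} [Ring A] (B : Subring A) (α : A ≃+* A) (β : B ≃+* B)

/-- Suppose induction `A ⊗_B −` is right adjoint to the twisted restriction
`_β A_α ⊗_A −`, with unit `η : A → A ⊗_B (_β A_α)` and counit
`ε : (_β A_α) ⊗_A A → B` satisfying the triangle identities.  Here `η(1) = Σ i, y' i ⊗ x i`
is encoded by the families `y', x : Fin n → A` (with the fact that `η` is an
`(A,A)`-bimodule map expressed by evaluating against all `B`-balanced biadditive maps),
and `ε` is encoded as an `A`-balanced biadditive `(B,B)`-bimodule map `e`.  Then, writing
`tr(a) = ε(a ⊗ 1) = e a 1` and `y i := α(y' i)`, the elements `{x i}` and `{y i}` are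
dual sets of generators: `a = Σ i, β(tr(a y i)) x i = Σ i, α⁻¹(y i) tr(x i α(a))` for
all `a ∈ A`.  In particular, `A` is an `(α,β)`-Frobenius extension of `B`. -/
theorem twisted_frobenius_of_adjunction
    (e : A →+ A →+ B)
    (hebal : ∀ (z a w : A), e (z * α a) w = e z (a * w))
    (heB : ∀ (b : B) (z w : A), e ((β b : A) * z) w = b * e z w)
    (heB' : ∀ (b : B) (z w : A), e z (w * (b : A)) = e z w * b)
    (n : ℕ) (y' x : Fin n → A)
    (hη : ∀ (M : Type u) [AddCommGroup M] (φ : A →+ A →+ M),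
      (∀ (z w : A) (b : B), φ (z * (b : A)) w = φ z ((β b : A) * w)) →
      ∀ a' : A, ∑ i, φ (a' * y' i) (x i) = ∑ i, φ (y' i) (x i * α a'))
    -- the two triangle identities:
    (htri₁ : ∀ a : A, a = ∑ i, ((β (e a (y' i)) : B) : A) * x i)
    (htri₂ : ∀ a : A, a = ∑ i, y' i * ((e (x i) a : B) : A)) :
    -- {x i} and {y i := α (y' i)} are dual sets of generators for tr a := e a 1:
    (∀ a : A, a = ∑ i, ((β (e (a * α (y' i)) 1) : B) : A) * x i) ∧
    (∀ a : A, a = ∑ i, α.symm (α (y' i)) * ((e (x i * α a) 1 : B) : A)) ∧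
    IsTwistedFrobeniusExtension B α β := by
  -- preliminary simplifications of the trace pairings
  have key₁ : ∀ a : A, ∀ i, e (a * α (y' i)) 1 = e a (y' i) := by
    intro a i; rw [hebal, mul_one]
  have key₂ : ∀ a : A, ∀ i, e (x i * α a) 1 = e (x i) a := by
    intro a i; rw [hebal, mul_one]
  refine ⟨?_, ?_, ?_⟩
  · intro a
    calc a = ∑ i, ((β (e a (y' i)) : B) : A) * x i := htri₁ a
    _ = ∑ i, ((β (e (a * α (y' i)) 1) : B) : A) * x i := by
        simp only [key₁]
  · intro a
    calc a = ∑ i, y' i * ((e (x i) a : B) : A) := htri₂ a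
    _ = ∑ i, α.symm (α (y' i)) * ((e (x i * α a) 1 : B) : A) := by
        simp only [key₂, RingEquiv.symm_apply_apply]
  · -- the Frobenius extension structure
    -- section and retraction between `A` and the free module `Fin n → B`
    let lA : A →ₗ[B] (Fin n → B) :=
      { toFun := fun a i => β (e a (y' i))
        map_add' := by intro a a'; funext i; simp
        map_smul' := by
          intro b a
          funext i
          show β (e ((b : A) * a) (y' i)) = b * β (e a (y' i))
          have : (b : A) = ((β (β.symm b) : B) : A) := by simp
          rw [this, heB, map_mul, RingEquiv.apply_symm_apply] }
    let lB : (Fin n → B) →ₗ[B] A :=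
      { toFun := fun c => ∑ i, ((c i : B) : A) * x i
        map_add' := by
          intro c c'
          rw [← Finset.sum_add_distrib]
          refine Finset.sum_congr rfl fun i _ => ?_
          show (((c i + c' i : B) : A)) * x i = _
          push_cast [add_mul]
          ring_nf
        map_smul' := by
          intro b c
          show (∑ i, (((b * c i : B) : A)) * x i) = (b : A) * ∑ i, ((c i : B) : A) * x i
          rw [Finset.mul_sum]
          refine Finset.sum_congr rfl fun i _ => ?_
          show (((b * c i : B) : A)) * x i = (b : A) * (((c i : B) : A) * x i)
          push_cast; rw [mul_assoc] }
    have hsplit : lB ∘ₗ lA = LinearMap.id := by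
      ext a
      show (∑ i, ((β (e a (y' i)) : B) : A) * x i) = a
      exact (htri₁ a).symm
    have hsurj : Function.Surjective lB := by
      intro a
      exact ⟨lA a, congrFun (congrArg (fun f => f.toFun) hsplit) a⟩
    refine ⟨Module.Finite.of_surjective lB hsurj,
      Module.Projective.of_split lA lB hsplit, e.flip, ?_, ?_, ?_, ?_, ?_, ?_⟩
    · intro a a'; exact map_add e.flip a a'
    · intro a b z; exact heB b z a
    · intro a a' z; exact (hebal z a' a).symm
    · intro a b z; exact heB' b z a
    · intro a ha
      calc a = ∑ i, y' i * ((e (x i) a : B) : A) := htri₂ a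
      _ = 0 := by
          simp only [show ∀ i, e (x i) a = 0 from fun i => ha (x i)]
          simp
    · intro f hf
      refine ⟨∑ i, y' i * ((f (x i) : B) : A), fun z => ?_⟩
      have : f z = ∑ i, (e z (y' i) : B) * f (x i) := by
        conv_lhs => rw [htri₁ z]
        rw [map_sum]
        exact Finset.sum_congr rfl fun i _ => hf _ _
      rw [this]
      show _ = e z (∑ i, y' i * ((f (x i) : B) : A))
      rw [map_sum]
      exact Finset.sum_congr rfl fun i _ => (heB' (f (x i)) z (y' i)).symm


end
end

section
/- Let F be a field, A a finite-dimensional Frobenius F-algebra with trace tr_A : A → F and Nakayama automorphism ψ_A, and B ⊆ A a subalgebra that is itself a Frobenius algebra with trace tr_B and Nakayama automorphism ψ_B. Fix an F-basis 𝓑 of B with right dual basis {b^∨} (so tr_B(b₁ b₂^∨) = δ_{b₁,b₂}). Then the map tr : A → B, tr(a) = Σ_{b∈𝓑} tr_A(ψ_B(b)a) b^∨, is a (B,B)-bimodule homomorphism from the (ψ_B, ψ_A)-twisted bimodule structure on A to B, i.e., tr(ψ_B(b) a ψ_A(b')) = b tr(a) b' for all b, b' ∈ B, a ∈ A. -/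
set_option maxHeartbeats 1600000 in
/-- Let `F` be a field, `A` a finite-dimensional Frobenius `F`-algebra with trace
`tr_A : A → F` and Nakayama automorphism `ψ_A`, and `B ⊆ A` a subalgebra that is itself
Frobenius with trace `tr_B` and Nakayama automorphism `ψ_B`.  Fix an `F`-basis `bb` of
`B` with right dual basis `bv` (so `tr_B (bb i * bv j) = δ_{i,j}`).  Then the map
`tr : A → B`, `tr(a) = Σ i, tr_A(ψ_B(bb i) a) • bv i`, is a `(B,B)`-bimodule
homomorphism from the `(ψ_B, ψ_A)`-twisted bimodule structure on `A` to `B`: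
`tr(ψ_B(b) a ψ_A(b')) = b * tr(a) * b'` for all `b, b' ∈ B`, `a ∈ A`. -/
theorem twisted_trace_is_bimodule_map
    {F : Type u} [Field F] {A : Type v} [Ring A] [Algebra F A] [FiniteDimensional F A]
    (trA : A →ₗ[F] F)
    (htrAnd : ∀ a : A, (∀ x : A, trA (x * a) = 0) → a = 0)
    (ψA : A ≃ₐ[F] A)
    (hψA : ∀ a₁ a₂ : A, trA (a₁ * a₂) = trA (a₂ * ψA a₁))
    (B : Subalgebra F A)
    (trB : B →ₗ[F] F)
    (htrBnd : ∀ b : B, (∀ z : B, trB (z * b) = 0) → b = 0)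
    (ψB : B ≃ₐ[F] B)
    (hψB : ∀ b₁ b₂ : B, trB (b₁ * b₂) = trB (b₂ * ψB b₁))
    {ι : Type w} [Fintype ι] [DecidableEq ι] (bb : Module.Basis ι F B) (bv : ι → B)
    (hdual : ∀ i j : ι, trB (bb i * bv j) = if i = j then 1 else 0) :
    ∀ (b b' : B) (a : A),
      (∑ i, trA ((ψB (bb i) : A) * ((ψB b : A) * a * ψA (b' : A))) • bv i) =
        b * (∑ i, trA ((ψB (bb i) : A) * a) • bv i) * b' := by
  intro b b' a
  -- L0 : trB (x * bv j) = bb.repr x j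
  have hL0 : ∀ (x : B) (j : ι), trB (x * bv j) = bb.repr x j := by
    intro x j
    have h1 : (trB.comp (LinearMap.mulRight F (bv j)) : B →ₗ[F] F) =
        (Finsupp.lapply j).comp (bb.repr : B →ₗ[F] ι →₀ F) := by
      apply bb.ext
      intro i
      simp [hdual i j, Finsupp.single_apply]
    simpa using LinearMap.congr_fun h1 x
  -- L1 : expansion in the dual basis
  have hL1 : ∀ y : B, (∑ i, trB (bb i * y) • bv i) = y := by
    intro y
    have key : ∀ z : B, trB (z * ((∑ i, trB (bb i * y) • bv i) - y)) = 0 := by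
      intro z
      have hz : trB (z * (∑ i, trB (bb i * y) • bv i)) = trB (z * y) := by
        rw [Finset.mul_sum]
        rw [map_sum]
        have : ∀ i, trB (z * (trB (bb i * y) • bv i)) = bb.repr z i * trB (bb i * y) := by
          intro i
          rw [mul_smul_comm, map_smul, smul_eq_mul, hL0 z i]
          ring
        rw [Finset.sum_congr rfl fun i _ => this i]
        have hzrepr : z = ∑ i, bb.repr z i • bb i := (bb.sum_repr z).symm
        conv_rhs => rw [hzrepr, Finset.sum_mul, map_sum]
        apply Finset.sum_congr rfl
        intro i _
        rw [smul_mul_assoc, map_smul, smul_eq_mul]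
      rw [mul_sub, map_sub, hz, sub_self]
    exact sub_eq_zero.mp (htrBnd _ key)
  -- L2 : right translation
  have hL2 : ∀ (g : B →ₗ[F] F) (u : B),
      (∑ i, g (bb i * u) • bv i) = u * ∑ i, g (bb i) • bv i := by
    intro g u
    have hexp : ∀ i, g (bb i * u) = ∑ j, trB (bb i * (u * bv j)) * g (bb j) := by
      intro i
      conv_lhs => rw [← bb.sum_repr (bb i * u)]
      rw [map_sum]
      apply Finset.sum_congr rfl
      intro j _
      rw [map_smul, smul_eq_mul, ← hL0 (bb i * u) j, mul_assoc]
    calc (∑ i, g (bb i * u) • bv i)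
        = ∑ j, g (bb j) • (∑ i, trB (bb i * (u * bv j)) • bv i) := by
          simp only [hexp, Finset.sum_smul, Finset.smul_sum]
          rw [Finset.sum_comm]
          apply Finset.sum_congr rfl
          intro j _
          apply Finset.sum_congr rfl
          intro i _
          rw [mul_comm, mul_smul]
      _ = u * ∑ i, g (bb i) • bv i := by
          rw [Finset.sum_congr rfl fun j _ => congrArg (g (bb j) • ·) (hL1 (u * bv j))]
          rw [Finset.mul_sum]
          apply Finset.sum_congr rfl
          intro j _
          rw [mul_smul_comm]
  -- L3 : left translation twisted by ψB
  have hL3 : ∀ (g : B →ₗ[F] F) (c : B),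
      (∑ i, g (c * bb i) • bv i) = (∑ i, g (bb i) • bv i) * ψB c := by
    intro g c
    have hexp : ∀ i, g (c * bb i) = ∑ j, trB (bb i * (bv j * ψB c)) * g (bb j) := by
      intro i
      conv_lhs => rw [← bb.sum_repr (c * bb i)]
      rw [map_sum]
      apply Finset.sum_congr rfl
      intro j _
      rw [map_smul, smul_eq_mul, ← hL0 (c * bb i) j]
      rw [mul_assoc, hψB c (bb i * bv j), mul_assoc]
    calc (∑ i, g (c * bb i) • bv i)
        = ∑ j, g (bb j) • (∑ i, trB (bb i * (bv j * ψB c)) • bv i) := by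
          simp only [hexp, Finset.sum_smul, Finset.smul_sum]
          rw [Finset.sum_comm]
          apply Finset.sum_congr rfl
          intro j _
          apply Finset.sum_congr rfl
          intro i _
          rw [mul_comm, mul_smul]
      _ = (∑ i, g (bb i) • bv i) * ψB c := by
          rw [Finset.sum_congr rfl fun j _ => congrArg (g (bb j) • ·) (hL1 (bv j * ψB c))]
          rw [Finset.sum_mul]
          apply Finset.sum_congr rfl
          intro j _
          rw [smul_mul_assoc]
  -- the functional g z = trA (ψB z * a)
  obtain ⟨g, hgapp⟩ : ∃ g : B →ₗ[F] F, ∀ z : B, g z = trA ((ψB z : A) * a) :=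
    ⟨trA.comp ((LinearMap.mulRight F a).comp (B.val.toLinearMap.comp ψB.toLinearMap)),
      fun z => rfl⟩
  set c : B := ψB.symm b' with hc
  have hstep : ∀ i, trA ((ψB (bb i) : A) * ((ψB b : A) * a * ψA (b' : A)))
      = g (c * bb i * b) := by
    intro i
    have h1 : (ψB (bb i) : A) * ((ψB b : A) * a * ψA (b' : A))
        = ((ψB (bb i) : A) * (ψB b : A) * a) * ψA (b' : A) := by
      simp only [mul_assoc]
    rw [h1, ← hψA (b' : A) _]
    rw [hgapp]
    congr 1
    have : ψB (c * bb i * b) = b' * ψB (bb i) * ψB b := by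
      rw [map_mul, map_mul, hc, AlgEquiv.apply_symm_apply]
    rw [this]
    push_cast
    simp only [mul_assoc]
  rw [Finset.sum_congr rfl fun i _ => congrArg (· • bv i) (hstep i)]
  have h2 : (∑ i, g (c * bb i * b) • bv i) = b * ∑ i, g (c * bb i) • bv i := by
    have h := hL2 (g.comp (LinearMap.mulLeft F c)) b
    simp only [LinearMap.comp_apply, LinearMap.mulLeft_apply, ← mul_assoc] at h
    exact h
  rw [h2]
  rw [hL3 g c]
  rw [hc]
  rw [AlgEquiv.apply_symm_apply]
  rw [← mul_assoc]
  have hfin : (∑ i, g (bb i) • bv i) = ∑ i, trA ((ψB (bb i) : A) * a) • bv i :=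
    Finset.sum_congr rfl fun i _ => by rw [hgapp]
  rw [hfin]
end

section
/- Let F be a field, A a finite-dimensional Frobenius F-algebra with Nakayama automorphism ψ_A, and B a Frobenius subalgebra with Nakayama automorphism ψ_B, such that A is projective as a left B-module. Then A is a (ψ_A, ψ_B)-Frobenius extension of B: A is finitely generated projective as a left B-module and there is an (A,B)-bimodule isomorphism A ≅ Hom_B(_{ψ_B} A_{ψ_A}, B), where the domain of Hom is A with left B-action b·a = ψ_B(b)a and right A-action a·a' = a ψ_A(a'). -/
set_option maxHeartbeats 1000000 in

/-- Let `F` be a field, `A` a finite-dimensional Frobenius `F`-algebra with Nakayama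
automorphism `ψ_A`, and `B` a Frobenius subalgebra with Nakayama automorphism `ψ_B`,
such that `A` is projective as a left `B`-module.  Then `A` is a `(ψ_A, ψ_B)`-Frobenius
extension of `B`: `A` is finitely generated projective as a left `B`-module and there is
an `(A,B)`-bimodule isomorphism `A ≅ Hom_B(_{ψ_B} A_{ψ_A}, B)`, where the domain of the
Hom is `A` with left `B`-action `b · a = ψ_B(b) a` and right `A`-action
`a · a' = a ψ_A(a')`, and the Hom space carries left `A`-action `(a · f)(x) = f(x ψ_A(a))`
and right `B`-action `(f · b)(x) = f(x) b`. -/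
theorem frobenius_subalgebra_gives_twisted_frobenius_extension
    {F : Type u} [Field F] {A : Type v} [Ring A] [Algebra F A] [FiniteDimensional F A]
    (trA : A →ₗ[F] F)
    (htrAnd : ∀ a : A, (∀ x : A, trA (x * a) = 0) → a = 0)
    (ψA : A ≃ₐ[F] A)
    (hψA : ∀ a₁ a₂ : A, trA (a₁ * a₂) = trA (a₂ * ψA a₁))
    (B : Subalgebra F A)
    (trB : B →ₗ[F] F)
    (htrBnd : ∀ b : B, (∀ z : B, trB (z * b) = 0) → b = 0)
    (ψB : B ≃ₐ[F] B)
    (hψB : ∀ b₁ b₂ : B, trB (b₁ * b₂) = trB (b₂ * ψB b₁))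
    (hproj : Module.Projective B A) :
    Module.Finite B A ∧ Module.Projective B A ∧
      ∃ Φ : A → A →+ B,
        (∀ a a' : A, Φ (a + a') = Φ a + Φ a') ∧
        (∀ (a : A) (b : B) (x : A), Φ a ((ψB b : A) * x) = b * Φ a x) ∧
        (∀ (a a' x : A), Φ (a' * a) x = Φ a (x * ψA a')) ∧
        (∀ (a : A) (b : B) (x : A), Φ (a * (b : A)) x = Φ a x * b) ∧
        (∀ a : A, (∀ x : A, Φ a x = 0) → a = 0) ∧
        (∀ f : A →+ B, (∀ (b : B) (x : A), f ((ψB b : A) * x) = b * f x) →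
          ∃ a : A, ∀ x : A, f x = Φ a x) := by
  classical
  refine ⟨Module.Finite.of_restrictScalars_finite F B A, hproj, ?_⟩
  -- pairing maps
  set TB : B →ₗ[F] Module.Dual F B := ((LinearMap.mul F B).compr₂ trB).flip with hTBdef
  set TA : A →ₗ[F] Module.Dual F A := ((LinearMap.mul F A).compr₂ trA).flip with hTAdef
  have hTB : ∀ (b z : B), TB b z = trB (z * b) := fun _ _ => rfl
  have hTA : ∀ (a x : A), TA a x = trA (x * a) := fun _ _ => rfl
  have hTBinj : Function.Injective TB := by
    intro x y h
    refine sub_eq_zero.mp (htrBnd _ fun z => ?_)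
    have hxy : TB x z = TB y z := by rw [h]
    rw [hTB, hTB] at hxy
    rw [mul_sub, map_sub, hxy, sub_self]
  have hTAinj : Function.Injective TA := by
    intro x y h
    refine sub_eq_zero.mp (htrAnd _ fun z => ?_)
    have hxy : TA x z = TA y z := by rw [h]
    rw [hTA, hTA] at hxy
    rw [mul_sub, map_sub, hxy, sub_self]
  set eB : B ≃ₗ[F] Module.Dual F B :=
    TB.linearEquivOfInjective hTBinj Subspace.dual_finrank_eq.symm with heBdef
  set eA : A ≃ₗ[F] Module.Dual F A :=
    TA.linearEquivOfInjective hTAinj Subspace.dual_finrank_eq.symm with heAdef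
  set RB : A →ₗ[F] Module.Dual F B := (B.val.toLinearMap.dualMap).comp TA with hRBdef
  set D : A →ₗ[F] B := eB.symm.toLinearMap.comp RB with hDdef
  have hD : ∀ (a : A) (z : B), trB (z * D a) = trA ((z : A) * a) := by
    intro a z
    have h1 : eB (eB.symm (RB a)) = RB a := eB.apply_symm_apply _
    rw [heBdef, LinearMap.linearEquivOfInjective_apply] at h1
    exact LinearMap.congr_fun h1 z
  have hD1 : ∀ (b : B) (y : A), D ((b : A) * y) = b * D y := by
    intro b y
    refine sub_eq_zero.mp (htrBnd _ fun z => ?_)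
    have e1 : trB (z * D ((b : A) * y)) = trA ((z : A) * ((b : A) * y)) := hD _ _
    have e2 : trB (z * (b * D y)) = trA ((z : A) * ((b : A) * y)) := by
      rw [← mul_assoc, hD (a := y) (z := z * b)]
      push_cast
      rw [mul_assoc]
    rw [mul_sub, map_sub, e1, e2, sub_self]
  have hD2 : ∀ (y : A) (b : B), D (y * ψA (b : A)) = D y * ψB b := by
    intro y b
    refine sub_eq_zero.mp (htrBnd _ fun z => ?_)
    have e1 : trB (z * D (y * ψA (b : A))) = trA ((b : A) * ((z : A) * y)) := by
      rw [hD, ← mul_assoc, ← hψA]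
    have e2 : trB (z * (D y * ψB b)) = trA ((b : A) * ((z : A) * y)) := by
      rw [← mul_assoc, ← hψB b (z * D y), ← mul_assoc, hD (a := y) (z := b * z)]
      push_cast
      rw [mul_assoc]
    rw [mul_sub, map_sub, e1, e2, sub_self]
  refine ⟨fun a => AddMonoidHom.mk' (fun x => ψB.symm (D (x * ψA a)))
    (fun x y => by
      show ψB.symm (D ((x + y) * ψA a)) = ψB.symm (D (x * ψA a)) + ψB.symm (D (y * ψA a))
      rw [add_mul, map_add, map_add]), ?_, ?_, ?_, ?_, ?_, ?_⟩
  · intro a a'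
    refine AddMonoidHom.ext fun x => ?_
    show ψB.symm (D (x * ψA (a + a'))) = ψB.symm (D (x * ψA a)) + ψB.symm (D (x * ψA a'))
    rw [_root_.map_add ψA, mul_add, map_add, map_add]
  · intro a b x
    show ψB.symm (D (((ψB b : A) * x) * ψA a)) = b * ψB.symm (D (x * ψA a))
    rw [mul_assoc, hD1, _root_.map_mul ψB.symm, AlgEquiv.symm_apply_apply]
  · intro a a' x
    show ψB.symm (D (x * ψA (a' * a))) = ψB.symm (D ((x * ψA a') * ψA a))
    rw [_root_.map_mul ψA a' a, mul_assoc]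
  · intro a b x
    show ψB.symm (D (x * ψA (a * (b : A)))) = ψB.symm (D (x * ψA a)) * b
    rw [_root_.map_mul ψA a ((b : A)), ← mul_assoc, hD2, _root_.map_mul ψB.symm, AlgEquiv.symm_apply_apply]
  · intro a ha
    have h0 : ∀ x : A, D (x * ψA a) = 0 := by
      intro x
      have := congrArg ψB (ha x)
      simpa using this
    have h1 : ∀ x : A, trA (x * ψA a) = 0 := by
      intro x
      have h2 := hD (x * ψA a) 1
      rw [h0, mul_zero, map_zero] at h2
      simpa using h2.symm
    have h3 : ψA a = 0 := htrAnd _ h1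
    have : ψA a = ψA 0 := by rw [h3, map_zero]
    exact ψA.injective this
  · intro f hf
    have hfl : ∀ (c : F) (x : A), f (c • x) = c • f x := by
      intro c x
      have h1 : c • x = (ψB (algebraMap F B c) : A) * x := by
        rw [AlgEquiv.commutes, Subalgebra.coe_algebraMap, Algebra.smul_def]
      rw [h1, hf, Algebra.smul_def]
    set fl : A →ₗ[F] B := { toFun := f, map_add' := f.map_add, map_smul' := hfl } with hfldef
    set a₀ : A := eA.symm (trB.comp fl) with ha₀def
    have ha₀ : ∀ x : A, trA (x * a₀) = trB (f x) := by
      intro x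
      have h1 : eA (eA.symm (trB.comp fl)) = trB.comp fl := eA.apply_symm_apply _
      rw [heAdef, LinearMap.linearEquivOfInjective_apply] at h1
      exact LinearMap.congr_fun h1 x
    set a : A := ψA.symm a₀ with hadef
    have ha : ∀ x : A, trA (a * x) = trB (f x) := by
      intro x
      rw [hψA a x, hadef, AlgEquiv.apply_symm_apply]
      exact ha₀ x
    refine ⟨a, fun x => ?_⟩
    have key : ψB (f x) = D (x * ψA a) := by
      refine sub_eq_zero.mp (htrBnd _ fun z => ?_)
      have e1 : trB (z * ψB (f x)) = trB (f x * z) := (hψB (f x) z).symm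
      have e2 : trB (z * D (x * ψA a)) = trB (f x * z) := by
        rw [hD]
        calc trA ((z : A) * (x * ψA a)) = trA (((z : A) * x) * ψA a) := by rw [mul_assoc]
          _ = trA (a * ((z : A) * x)) := (hψA a _).symm
          _ = trB (f ((z : A) * x)) := ha _
          _ = trB (ψB.symm z * f x) := by
              rw [show ((z : B) : A) * x = ((ψB (ψB.symm z) : B) : A) * x by
                rw [AlgEquiv.apply_symm_apply], hf]
          _ = trB (f x * z) := by rw [hψB (ψB.symm z) (f x), AlgEquiv.apply_symm_apply]
      rw [mul_sub, map_sub, e1, e2, sub_self]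
    have := congrArg ψB.symm key
    simpa using this
end
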